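/- arXiv:1112.1931 — 6 statements merged into one kernel-verified Lean document; each statement's English description precedes it below -/
import Mathlib

section
/- Let d ≥ 1 be an integer, let α ∈ (0,1), and let s > 1. There exists a constant C > 0 (depending only on s, α, d) such that for every λ ∈ ℝ, every nonzero h ∈ ℝ^d, and every σ > 0 satisfying σ² ≥ ‖h‖^{2α}, one has ∫_ℝ (‖h‖² + (λ + u)²)^{-s/2} dγ_{0,σ²}(u) ≤ C ‖h‖^{1 - s - α}, where γ_{0,σ²} denotes the centered Gaussian probability measure on ℝ with variance σ². -/
open MeasureTheory ProbabilityTheory Real ENNReal NNReal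

/-- Case `s > 1` of the key Gaussian expectation estimate: if `σ² ≥ ‖h‖^{2α}`, then
`∫ (‖h‖² + (λ+u)²)^{-s/2} dγ_{0,σ²}(u) ≤ C ‖h‖^{1-s-α}`. -/
theorem stmt0 (d : ℕ) (hd : 1 ≤ d) (α : ℝ) (hα : α ∈ Set.Ioo (0 : ℝ) 1) (s : ℝ) (hs : 1 < s) :
    ∃ C > (0 : ℝ), ∀ (lam : ℝ) (h : EuclideanSpace ℝ (Fin d)) (σ : ℝ),
      h ≠ 0 → 0 < σ → ‖h‖ ^ (2 * α) ≤ σ ^ 2 →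
      ∫ u, (‖h‖ ^ 2 + (lam + u) ^ 2) ^ (-(s / 2)) ∂(gaussianReal 0 (σ ^ 2).toNNReal)
        ≤ C * ‖h‖ ^ (1 - s - α) := by
  obtain ⟨hα0, hα1⟩ := hα
  have hs0 : (0 : ℝ) < s := by linarith
  set G : ℝ → ℝ := fun v => ((1 : ℝ) + v ^ 2) ^ (-(s / 2)) with hG
  have hGint : Integrable G := by
    have := integrable_rpow_neg_one_add_norm_sq (E := ℝ) (μ := volume) (r := s)
      (by simpa using hs)
    simpa [hG, Real.norm_eq_abs, sq_abs, neg_div] using this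
  have hGnonneg : ∀ v, 0 ≤ G v := fun v => Real.rpow_nonneg (by positivity) _
  set I : ℝ := ∫ v : ℝ, G v with hI
  have hIpos : 0 < I := by
    rw [hI, integral_pos_iff_support_of_nonneg hGnonneg hGint]
    have hsupp : Function.support G = Set.univ := by
      ext v
      simp only [Function.mem_support, Set.mem_univ, iff_true]
      exact ne_of_gt (Real.rpow_pos_of_pos (by positivity) _)
    rw [hsupp]
    simp
  refine ⟨I / Real.sqrt (2 * π), by positivity, ?_⟩
  intro lam h σ hh hσ hvar
  set a : ℝ := ‖h‖ with ha'
  have ha : 0 < a := norm_pos_iff.mpr hh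
  -- σ ≥ a ^ α
  have hσa : a ^ α ≤ σ := by
    have h1 : (a ^ α) ^ 2 ≤ σ ^ 2 := by
      rw [← Real.rpow_natCast (a ^ α) 2, ← Real.rpow_mul ha.le]
      simpa [mul_comm] using hvar
    exact (pow_le_pow_iff_left₀ (by positivity) hσ.le two_ne_zero).mp h1
  set f : ℝ → ℝ := fun u => (a ^ 2 + (lam + u) ^ 2) ^ (-(s / 2)) with hf
  have hfnonneg : ∀ u, 0 ≤ f u := fun u => Real.rpow_nonneg (by positivity) _
  -- pointwise identity
  have hkey : ∀ u, f u = a ^ (-s) * G ((lam + u) / a) := by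
    intro u
    have h1 : a ^ 2 + (lam + u) ^ 2 = a ^ 2 * (1 + ((lam + u) / a) ^ 2) := by
      field_simp
    show (a ^ 2 + (lam + u) ^ 2) ^ (-(s / 2)) = _
    rw [h1]
    rw [Real.mul_rpow (by positivity) (by positivity)]
    congr 1
    rw [← Real.rpow_natCast a 2, ← Real.rpow_mul ha.le]
    congr 1
    push_cast
    ring
  -- integrability of f
  have hfint : Integrable f := by
    have h2 : Integrable (fun u : ℝ => G (u / a)) := hGint.comp_div ha.ne'
    have h3 : Integrable (fun u : ℝ => G ((lam + u) / a)) := by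
      have := h2.comp_add_left lam
      simpa using this
    have h4 := h3.const_mul (a ^ (-s))
    exact h4.congr (Filter.Eventually.of_forall fun u => (hkey u).symm)
  -- value of ∫ f du
  have hfval : ∫ u, f u = a ^ (1 - s) * I := by
    calc ∫ u, f u = ∫ u, a ^ (-s) * G ((lam + u) / a) := by
          exact integral_congr_ae (Filter.Eventually.of_forall hkey)
      _ = a ^ (-s) * ∫ u, G ((lam + u) / a) := integral_const_mul _ _
      _ = a ^ (-s) * ∫ u, G (u / a) := by
          rw [integral_add_left_eq_self (fun u : ℝ => G (u / a)) lam]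
      _ = a ^ (-s) * (|a| • I) := by rw [Measure.integral_comp_div G a]
      _ = a ^ (1 - s) * I := by
          rw [abs_of_pos ha, smul_eq_mul, ← mul_assoc]
          congr 1
          rw [show (1 - s) = -s + 1 by ring, Real.rpow_add ha, Real.rpow_one]
  -- rewrite the Gaussian integral as an integral against the density
  have hv0 : (σ ^ 2).toNNReal ≠ 0 := by
    simp only [ne_eq, Real.toNNReal_eq_zero, not_le]
    positivity
  set v : ℝ≥0 := (σ ^ 2).toNNReal with hv
  have hmeas : gaussianReal 0 v
      = volume.withDensity (fun x => ((gaussianPDFReal 0 v x).toNNReal : ℝ≥0∞)) :=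
    gaussianReal_of_var_ne_zero 0 hv0
  have hint_eq : ∫ u, f u ∂(gaussianReal 0 v) = ∫ u, gaussianPDFReal 0 v u * f u := by
    rw [hmeas, integral_withDensity_eq_integral_smul
      ((measurable_gaussianPDFReal 0 v).real_toNNReal) f]
    refine integral_congr_ae (Filter.Eventually.of_forall fun u => ?_)
    show (gaussianPDFReal 0 v u).toNNReal • f u = gaussianPDFReal 0 v u * f u
    rw [NNReal.smul_def, smul_eq_mul, Real.coe_toNNReal _ (gaussianPDFReal_nonneg 0 v u)]
  -- bound the density
  have hvr : (v : ℝ) = σ ^ 2 := Real.coe_toNNReal _ (by positivity)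
  have hc : Real.sqrt (2 * π * v) = Real.sqrt (2 * π) * σ := by
    rw [Real.sqrt_mul (by positivity), hvr, Real.sqrt_sq hσ.le]
  have hpdf_le : ∀ u, gaussianPDFReal 0 v u ≤ (Real.sqrt (2 * π) * a ^ α)⁻¹ := by
    intro u
    rw [gaussianPDFReal]
    have h1 : Real.exp (-(u - 0) ^ 2 / (2 * v)) ≤ 1 := by
      rw [Real.exp_le_one_iff]
      have : (0:ℝ) < (v:ℝ) := by rw [hvr]; positivity
      apply div_nonpos_of_nonpos_of_nonneg
      · simp [sq_nonneg]
      · positivity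
    calc (Real.sqrt (2 * π * v))⁻¹ * Real.exp (-(u - 0) ^ 2 / (2 * v))
        ≤ (Real.sqrt (2 * π * v))⁻¹ * 1 := by
          apply mul_le_mul_of_nonneg_left h1 (by positivity)
      _ = (Real.sqrt (2 * π) * σ)⁻¹ := by rw [mul_one, hc]
      _ ≤ (Real.sqrt (2 * π) * a ^ α)⁻¹ := by
          apply inv_anti₀ (by positivity)
          exact mul_le_mul_of_nonneg_left hσa (by positivity)
  -- main estimate
  have hmain : ∫ u, f u ∂(gaussianReal 0 v) ≤ (Real.sqrt (2 * π) * a ^ α)⁻¹ * (a ^ (1 - s) * I) := by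
    rw [hint_eq, ← hfval, ← integral_const_mul]
    refine integral_mono ?_ (hfint.const_mul _) fun u => ?_
    · refine hfint.bdd_mul (c := (Real.sqrt (2 * π) * a ^ α)⁻¹)
        ((measurable_gaussianPDFReal 0 v).aestronglyMeasurable)
        (Filter.Eventually.of_forall fun u => ?_)
      rw [Real.norm_eq_abs, abs_of_nonneg (gaussianPDFReal_nonneg 0 v u)]
      exact hpdf_le u
    · exact mul_le_mul_of_nonneg_right (hpdf_le u) (hfnonneg u)
  refine le_trans hmain (le_of_eq ?_)
  rw [show (1 - s - α) = (1 - s) + (-α) by ring, Real.rpow_add ha,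
    mul_inv, ← Real.rpow_neg ha.le]
  ring
end

section
/- Let d ≥ 1 be an integer, let α ∈ (0,1), and let 0 < s < 1. There exists a constant C > 0 (depending only on s) such that for every λ ∈ ℝ, every nonzero h ∈ ℝ^d, and every σ > 0 satisfying σ² ≥ ‖h‖^{2α}, one has ∫_ℝ (‖h‖² + (λ + u)²)^{-s/2} dγ_{0,σ²}(u) ≤ C ‖h‖^{-α s}, where γ_{0,σ²} denotes the centered Gaussian probability measure on ℝ with variance σ². -/
open MeasureTheory ProbabilityTheory

lemma aux_sq_rpow {x : ℝ} (hx : 0 ≤ x) (s : ℝ) : (x ^ 2) ^ (-(s / 2)) = x ^ (-s) := by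
  rw [← Real.rpow_natCast x 2, ← Real.rpow_mul hx]
  norm_num
  congr 1
  ring

lemma aux_J1 {s : ℝ} (hs : -1 < -s) {σ : ℝ} (hσ : 0 ≤ σ) :
    IntervalIntegrable (fun x => |x| ^ (-s)) volume 0 σ := by
  have base := intervalIntegral.intervalIntegrable_rpow' (a := 0) (b := σ) hs
  rw [intervalIntegrable_iff, Set.uIoc_of_le hσ] at base ⊢
  exact base.congr_fun (fun x hx => by rw [abs_of_pos hx.1]) measurableSet_Ioc

lemma aux_J2 {s : ℝ} (hs : -1 < -s) {σ : ℝ} (hσ : 0 ≤ σ) :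
    IntervalIntegrable (fun x => |x| ^ (-s)) volume (-σ) 0 := by
  rw [IntervalIntegrable.iff_comp_neg]
  simp only [abs_neg, neg_neg, neg_zero]
  exact (aux_J1 hs hσ).symm

lemma aux_abs_intervalIntegrable {s : ℝ} (hs : -1 < -s) {σ : ℝ} (hσ : 0 ≤ σ) :
    IntervalIntegrable (fun x => |x| ^ (-s)) volume (-σ) σ :=
  (aux_J2 hs hσ).trans (aux_J1 hs hσ)

lemma aux_abs_integral {s : ℝ} (hs0 : 0 < s) (hs1 : s < 1) {σ : ℝ} (hσ : 0 < σ) :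
    ∫ x in (-σ)..σ, |x| ^ (-s) = 2 * (σ ^ (1 - s) / (1 - s)) := by
  have J1 : IntervalIntegrable (fun x => |x| ^ (-s)) volume 0 σ :=
    aux_J1 (by linarith) hσ.le
  have J2 : IntervalIntegrable (fun x => |x| ^ (-s)) volume (-σ) 0 :=
    aux_J2 (by linarith) hσ.le
  have h2 : ∫ x in (0:ℝ)..σ, |x| ^ (-s) = σ ^ (1 - s) / (1 - s) := by
    rw [intervalIntegral.integral_congr (g := fun x => x ^ (-s))
      (fun x hx => by
        rw [Set.uIcc_of_le hσ.le] at hx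
        simp only [abs_of_nonneg hx.1]),
      integral_rpow (Or.inl (by linarith))]
    rw [Real.zero_rpow (by linarith : -s + 1 ≠ 0)]
    ring_nf
  have h3 : ∫ x in (-σ)..(0:ℝ), |x| ^ (-s) = ∫ x in (0:ℝ)..σ, |x| ^ (-s) := by
    have := intervalIntegral.integral_comp_neg (a := (0:ℝ)) (b := σ)
      (fun x => |x| ^ (-s))
    simp only [abs_neg, neg_zero] at this
    exact this.symm
  rw [← intervalIntegral.integral_add_adjacent_intervals J2 J1, h3, h2]
  ring

lemma aux_alg {s σ : ℝ} (hσ : 0 < σ) (h1s : 0 < 1 - s) :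
    (σ * Real.sqrt (2 * Real.pi))⁻¹ * (2 * (σ ^ (1 - s) / (1 - s))) + σ ^ (-s)
      = (1 + 2 / ((1 - s) * Real.sqrt (2 * Real.pi))) * σ ^ (-s) := by
  have hπ : (0:ℝ) < Real.sqrt (2 * Real.pi) := Real.sqrt_pos.mpr (by positivity)
  rw [show (1:ℝ) - s = 1 + -s from by ring, Real.rpow_add hσ, Real.rpow_one]
  have hσne : σ ≠ 0 := hσ.ne'
  have hπne : Real.sqrt (2 * Real.pi) ≠ 0 := hπ.ne'
  have h1sne : (1:ℝ) + -s ≠ 0 := by intro hcon; apply h1s.ne'; linarith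
  generalize σ ^ (-s) = P
  generalize hT : Real.sqrt (2 * Real.pi) = T at hπne
  field_simp
  ring

/-- Case `0 < s < 1` of the key Gaussian expectation estimate: if `σ² ≥ ‖h‖^{2α}`, then
`∫ (‖h‖² + (λ+u)²)^{-s/2} dγ_{0,σ²}(u) ≤ C ‖h‖^{-αs}`. -/
theorem stmt1 (d : ℕ) (hd : 1 ≤ d) (α : ℝ) (hα : α ∈ Set.Ioo (0 : ℝ) 1) (s : ℝ)
    (hs : s ∈ Set.Ioo (0 : ℝ) 1) :
    ∃ C > (0 : ℝ), ∀ (lam : ℝ) (h : EuclideanSpace ℝ (Fin d)) (σ : ℝ),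
      h ≠ 0 → 0 < σ → ‖h‖ ^ (2 * α) ≤ σ ^ 2 →
      ∫ u, (‖h‖ ^ 2 + (lam + u) ^ 2) ^ (-(s / 2)) ∂(gaussianReal 0 (σ ^ 2).toNNReal)
        ≤ C * ‖h‖ ^ (-(α * s)) := by
  obtain ⟨hs0, hs1⟩ := hs
  obtain ⟨hα0, hα1⟩ := hα
  have h1s : (0:ℝ) < 1 - s := by linarith
  have hπ : (0:ℝ) < Real.sqrt (2 * Real.pi) := Real.sqrt_pos.mpr (by positivity)
  refine ⟨1 + 2 / ((1 - s) * Real.sqrt (2 * Real.pi)), by positivity, ?_⟩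
  intro lam h σ hh hσ hσ2
  set a : ℝ := ‖h‖ with ha
  have ha0 : 0 < a := norm_pos_iff.mpr hh
  -- σ ≥ a^α
  have haα : (0:ℝ) < a ^ α := Real.rpow_pos_of_pos ha0 α
  have hσa : a ^ α ≤ σ := by
    have h2 : (a ^ α) ^ 2 ≤ σ ^ 2 := by
      rw [← Real.rpow_natCast (a ^ α) 2, ← Real.rpow_mul ha0.le]
      convert hσ2 using 2
      push_cast; ring
    nlinarith
  have hσs : σ ^ (-s) ≤ a ^ (-(α * s)) := by
    have heq : a ^ (-(α * s)) = (a ^ α) ^ (-s) := by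
      rw [← Real.rpow_mul ha0.le]; ring_nf
    rw [heq]
    exact Real.rpow_le_rpow_of_nonpos haα hσa (by linarith)
  -- setup
  set v : NNReal := (σ ^ 2).toNNReal with hv
  have hv0 : v ≠ 0 := by
    simp only [hv, ne_eq, Real.toNNReal_eq_zero, not_le]
    positivity
  have hvr : (v : ℝ) = σ ^ 2 := Real.coe_toNNReal _ (by positivity)
  set γ : Measure ℝ := gaussianReal 0 v with hγ
  set f : ℝ → ℝ := fun u => (a ^ 2 + (lam + u) ^ 2) ^ (-(s / 2)) with hf
  have hfpos : ∀ u : ℝ, (0:ℝ) < a ^ 2 + (lam + u) ^ 2 := fun u => by positivity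
  have hf_cont : Continuous f := by
    apply Continuous.rpow_const (by continuity)
    intro u; exact Or.inl (hfpos u).ne'
  have hf_nonneg : ∀ u, 0 ≤ f u := fun u => Real.rpow_nonneg (hfpos u).le _
  have hf_int : Integrable f γ := by
    refine (integrable_const (a ^ (-s))).mono' hf_cont.aestronglyMeasurable ?_
    filter_upwards with u
    rw [Real.norm_eq_abs, abs_of_nonneg (hf_nonneg u), ← aux_sq_rpow ha0.le]
    exact Real.rpow_le_rpow_of_nonpos (by positivity) (by nlinarith [sq_nonneg (lam + u)])
      (by linarith)
  set A : Set ℝ := Metric.closedBall (-lam) σ with hA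
  have hAm : MeasurableSet A := measurableSet_closedBall
  -- bound on the complement
  have hcompl : ∫ u in Aᶜ, f u ∂γ ≤ σ ^ (-s) := by
    have hσ2f : ∀ u ∈ Aᶜ, f u ≤ σ ^ (-s) := by
      intro u hu
      simp only [hA, Set.mem_compl_iff, Metric.mem_closedBall, Real.dist_eq, not_le] at hu
      have hd2 : σ ^ 2 ≤ (lam + u) ^ 2 := by
        have h1 := abs_nonneg (u - -lam)
        nlinarith [sq_abs (u - -lam)]
      rw [hf, ← aux_sq_rpow hσ.le]
      exact Real.rpow_le_rpow_of_nonpos (by positivity) (by nlinarith) (by linarith)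
    calc ∫ u in Aᶜ, f u ∂γ ≤ ∫ _ in Aᶜ, σ ^ (-s) ∂γ := by
          refine setIntegral_mono_on hf_int.integrableOn ((integrableOn_const_iff (C := σ ^ (-s))).mpr ?_) hAm.compl
            hσ2f
          exact Or.inr (measure_lt_top γ _)
      _ = (γ Aᶜ).toReal * σ ^ (-s) := by rw [setIntegral_const, smul_eq_mul, measureReal_def]
      _ ≤ 1 * σ ^ (-s) := by
          apply mul_le_mul_of_nonneg_right _ (Real.rpow_nonneg hσ.le _)
          exact ENNReal.toReal_le_of_le_ofReal zero_le_one (by simpa using prob_le_one)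
      _ = σ ^ (-s) := one_mul _
  -- density bound
  set c : ENNReal := ENNReal.ofReal ((σ * Real.sqrt (2 * Real.pi))⁻¹) with hc
  have hpdf : ∀ x, gaussianPDF 0 v x ≤ c := by
    intro x
    rw [gaussianPDF]
    apply ENNReal.ofReal_le_ofReal
    rw [gaussianPDFReal]
    have h1 : Real.sqrt (2 * Real.pi * v) = σ * Real.sqrt (2 * Real.pi) := by
      rw [hvr, mul_comm (2 * Real.pi), Real.sqrt_mul (by positivity), Real.sqrt_sq hσ.le]
    rw [h1]
    calc (σ * Real.sqrt (2 * Real.pi))⁻¹ * Real.exp (-(x - 0) ^ 2 / (2 * v))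
        ≤ (σ * Real.sqrt (2 * Real.pi))⁻¹ * 1 := by
          apply mul_le_mul_of_nonneg_left _ (by positivity)
          rw [Real.exp_le_one_iff, hvr]
          apply div_nonpos_of_nonpos_of_nonneg _ (by positivity)
          simp [sq_nonneg]
      _ = _ := mul_one _
  have hle : γ ≤ c • volume := by
    rw [hγ, gaussianReal_of_var_ne_zero 0 hv0, Measure.le_iff]
    intro E hE
    rw [withDensity_apply _ hE]
    calc ∫⁻ x in E, gaussianPDF 0 v x ≤ ∫⁻ _ in E, c := lintegral_mono fun x => hpdf x
      _ = c * volume E := by rw [setLIntegral_const]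
      _ = (c • volume) E := by simp [Measure.smul_apply, smul_eq_mul]
  -- the dominating function on A
  set g : ℝ → ℝ := fun u => |lam + u| ^ (-s) with hg
  have hg_nonneg : ∀ u, 0 ≤ g u := fun u => Real.rpow_nonneg (abs_nonneg _) _
  have hii : IntervalIntegrable g volume (-lam - σ) (-lam + σ) := by
    have h0 := (aux_abs_intervalIntegrable (by linarith : (-1:ℝ) < -s) hσ.le).comp_add_right lam
    have e1 : -lam - σ = -σ - lam := by ring
    have e2 : -lam + σ = σ - lam := by ring
    rw [hg, e1, e2]
    simpa only [add_comm] using h0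
  have hIccA : A = Set.Icc (-lam - σ) (-lam + σ) := Real.closedBall_eq_Icc
  have hgA : IntegrableOn g A volume := by
    rw [hIccA, ← intervalIntegrable_iff_integrableOn_Icc_of_le (by linarith)]
    exact hii
  have hc_ne_top : c ≠ ⊤ := ENNReal.ofReal_ne_top
  have hgc : Integrable g ((c • volume).restrict A) := by
    rw [Measure.restrict_smul]
    exact hgA.smul_measure hc_ne_top
  have hleA : γ.restrict A ≤ (c • volume).restrict A :=
    Measure.restrict_mono (subset_refl _) hle
  have hgγ : Integrable g (γ.restrict A) := hgc.mono_measure hleA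
  -- pointwise bound on A (a.e.)
  have hfg : ∫ u in A, f u ∂γ ≤ ∫ u in A, g u ∂γ := by
    refine integral_mono_ae hf_int.integrableOn hgγ ?_
    have h0 : (γ.restrict A) {-lam} = 0 := by
      apply le_antisymm _ (by positivity)
      calc (γ.restrict A) {-lam} ≤ γ {-lam} := Measure.restrict_apply_le _ _
        _ = 0 := (gaussianReal_absolutelyContinuous 0 hv0) (measure_singleton _)
    have hset : {u : ℝ | ¬ u ≠ -lam} = {-lam} := by ext u; simp
    have hae : ∀ᵐ u ∂γ.restrict A, u ≠ -lam := by
      rw [ae_iff, hset]; exact h0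
    filter_upwards [hae] with u hu
    have hw : lam + u ≠ 0 := fun hcon => hu (by linarith)
    have hw2 : (0:ℝ) < (lam + u) ^ 2 := by positivity
    have hgu : g u = ((lam + u) ^ 2) ^ (-(s / 2)) := by
      show |lam + u| ^ (-s) = _
      rw [← aux_sq_rpow (abs_nonneg (lam + u)), sq_abs]
    rw [hgu]
    exact Real.rpow_le_rpow_of_nonpos hw2 (by nlinarith [sq_nonneg a]) (by linarith)
  -- compute the dominating integral
  have hval : ∫ u in A, g u ∂volume = 2 * (σ ^ (1 - s) / (1 - s)) := by
    have hcomp := intervalIntegral.integral_comp_add_left (a := -lam - σ) (b := -lam + σ)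
      (fun x => |x| ^ (-s)) lam
    rw [show lam + (-lam - σ) = -σ from by ring, show lam + (-lam + σ) = σ from by ring]
      at hcomp
    rw [hIccA, MeasureTheory.integral_Icc_eq_integral_Ioc,
      ← intervalIntegral.integral_of_le (by linarith)]
    exact hcomp.trans (aux_abs_integral hs0 hs1 hσ)
  have hAbound : ∫ u in A, f u ∂γ ≤ c.toReal * (2 * (σ ^ (1 - s) / (1 - s))) := by
    calc ∫ u in A, f u ∂γ ≤ ∫ u in A, g u ∂γ := hfg
      _ ≤ ∫ u in A, g u ∂(c • volume) := by
          refine integral_mono_measure hleA ?_ hgc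
          filter_upwards with u; exact hg_nonneg u
      _ = c.toReal * ∫ u in A, g u ∂volume := by
          rw [Measure.restrict_smul, integral_smul_measure, smul_eq_mul]
      _ = c.toReal * (2 * (σ ^ (1 - s) / (1 - s))) := by rw [hval]
  -- combine
  have hsplit : ∫ u, f u ∂γ = (∫ u in A, f u ∂γ) + ∫ u in Aᶜ, f u ∂γ :=
    (integral_add_compl hAm hf_int).symm
  have hctr : c.toReal = (σ * Real.sqrt (2 * Real.pi))⁻¹ :=
    ENNReal.toReal_ofReal (by positivity)
  have htotal : ∫ u, f u ∂γ ≤ (1 + 2 / ((1 - s) * Real.sqrt (2 * Real.pi))) * σ ^ (-s) := by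
    rw [hsplit]
    have key : c.toReal * (2 * (σ ^ (1 - s) / (1 - s))) + σ ^ (-s)
        = (1 + 2 / ((1 - s) * Real.sqrt (2 * Real.pi))) * σ ^ (-s) := by
      rw [hctr]; exact aux_alg hσ h1s
    linarith [hAbound, hcompl]
  calc ∫ u, f u ∂γ ≤ (1 + 2 / ((1 - s) * Real.sqrt (2 * Real.pi))) * σ ^ (-s) := htotal
    _ ≤ (1 + 2 / ((1 - s) * Real.sqrt (2 * Real.pi))) * a ^ (-(α * s)) := by
        apply mul_le_mul_of_nonneg_left hσs (by positivity)
end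

section
/- Let 0 < s < 1. There exists a constant C > 0 (depending only on s) such that for every λ ∈ ℝ and every σ > 0, one has ∫_ℝ |λ + u|^{-s} dγ_{0,σ²}(u) ≤ C σ^{-s}, where γ_{0,σ²} denotes the centered Gaussian probability measure on ℝ with variance σ². -/
open MeasureTheory ProbabilityTheory

/-- Key lintegral computation: `∫⁻_{Icc 0 σ} |t|^{-s} dt = σ^{1-s}/(1-s)`. -/
lemma aux_lintegral_Icc (s σ : ℝ) (hs : s ∈ Set.Ioo (0 : ℝ) 1) (hσ : 0 < σ) :
    ∫⁻ t in Set.Icc (0:ℝ) σ, ENNReal.ofReal (|t| ^ (-s)) ∂volume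
      = ENNReal.ofReal (σ ^ (1 - s) / (1 - s)) := by
  have h1 : ∫⁻ t in Set.Icc (0:ℝ) σ, ENNReal.ofReal (|t| ^ (-s)) ∂volume
      = ∫⁻ t in Set.Ioc (0:ℝ) σ, ENNReal.ofReal (|t| ^ (-s)) ∂volume := by
    rw [Measure.restrict_congr_set MeasureTheory.Ioc_ae_eq_Icc]
  rw [h1]
  have h2 : ∫⁻ t in Set.Ioc (0:ℝ) σ, ENNReal.ofReal (|t| ^ (-s)) ∂volume
      = ∫⁻ t in Set.Ioc (0:ℝ) σ, ENNReal.ofReal (t ^ (-s)) ∂volume := by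
    refine setLIntegral_congr_fun measurableSet_Ioc ?_
    intro t ht; dsimp only
    rw [abs_of_pos ht.1]
  rw [h2]
  have hint : IntegrableOn (fun t : ℝ => t ^ (-s)) (Set.Ioc 0 σ) volume := by
    have := intervalIntegral.intervalIntegrable_rpow' (a := 0) (b := σ) (r := -s)
      (by linarith [hs.2])
    rw [intervalIntegrable_iff_integrableOn_Ioc_of_le hσ.le] at this
    exact this
  rw [← ofReal_integral_eq_lintegral_ofReal hint]
  · congr 1
    have : ∫ t in Set.Ioc (0:ℝ) σ, t ^ (-s) = ∫ t in (0:ℝ)..σ, t ^ (-s) := by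
      rw [intervalIntegral.integral_of_le hσ.le]
    rw [this, integral_rpow (Or.inl (by linarith [hs.2]))]
    rw [Real.zero_rpow (by linarith [hs.2] : -s + 1 ≠ 0)]
    ring_nf
  · refine ae_restrict_of_forall_mem measurableSet_Ioc fun t ht => ?_
    exact Real.rpow_nonneg ht.1.le _

/-- Measurability of the shifted negative power. -/
lemma aux_meas (s lam : ℝ) (hs : s ≠ 0) :
    Measurable fun u : ℝ => |lam + u| ^ (-s) := by
  have h : (fun u : ℝ => |lam + u| ^ (-s))
      = fun u => if lam + u = 0 then 0 else Real.exp (Real.log |lam + u| * (-s)) := by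
    funext u
    by_cases h : lam + u = 0
    · rw [if_pos h, h, abs_zero, Real.zero_rpow (neg_ne_zero.mpr hs)]
    · rw [if_neg h, Real.rpow_def_of_pos (abs_pos.mpr h)]
  rw [h]
  have hm : Measurable fun u : ℝ => lam + u := measurable_const.add measurable_id
  exact Measurable.ite (measurableSet_eq_fun hm measurable_const) measurable_const
    (Real.measurable_exp.comp ((Real.measurable_log.comp hm.abs).mul measurable_const))

/-- Symmetry: the lintegral of `|t|^{-s}` over `Icc (-σ) 0` equals that over `Icc 0 σ`. -/
lemma aux_symm (s σ : ℝ) :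
    ∫⁻ t in Set.Icc (-σ) (0:ℝ), ENNReal.ofReal (|t| ^ (-s)) ∂volume
      = ∫⁻ t in Set.Icc (0:ℝ) σ, ENNReal.ofReal (|t| ^ (-s)) ∂volume := by
  have hmp : MeasurePreserving (fun x : ℝ => -x) volume volume :=
    Measure.measurePreserving_neg volume
  have hemb : MeasurableEmbedding (fun x : ℝ => -x) :=
    (Homeomorph.neg ℝ).measurableEmbedding
  have h := hmp.setLIntegral_comp_preimage_emb hemb
    (fun t => ENNReal.ofReal (|t| ^ (-s))) (Set.Icc (0:ℝ) σ)
  have hpre : (fun x : ℝ => -x) ⁻¹' Set.Icc (0:ℝ) σ = Set.Icc (-σ) (0:ℝ) := by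
    ext u
    simp only [Set.mem_preimage, Set.mem_Icc]
    constructor
    · rintro ⟨h1, h2⟩; constructor <;> linarith
    · rintro ⟨h1, h2⟩; constructor <;> linarith
  rw [hpre] at h
  rw [← h]
  refine setLIntegral_congr_fun measurableSet_Icc (fun t _ => ?_)
  rw [abs_neg]

/-- Uniform negative-moment bound for a shifted centered Gaussian:
`∫ |λ + u|^{-s} dγ_{0,σ²}(u) ≤ C σ^{-s}` for `0 < s < 1`. -/
theorem stmt2 (s : ℝ) (hs : s ∈ Set.Ioo (0 : ℝ) 1) :
    ∃ C > (0 : ℝ), ∀ (lam σ : ℝ), 0 < σ →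
      ∫ u, |lam + u| ^ (-s) ∂(gaussianReal 0 (σ ^ 2).toNNReal) ≤ C * σ ^ (-s) := by
  obtain ⟨hs0, hs1⟩ := hs
  have h1s : (0:ℝ) < 1 - s := by linarith
  have hC : (0:ℝ) < 1 + 2 / (1 - s) := by
    have := div_pos (by norm_num : (0:ℝ) < 2) h1s
    linarith
  refine ⟨1 + 2 / (1 - s), hC, fun lam σ hσ => ?_⟩
  set v : NNReal := (σ ^ 2).toNNReal with hv_def
  have hv : v ≠ 0 := by
    have : (0:ℝ) < σ ^ 2 := by positivity
    exact (Real.toNNReal_pos.mpr this).ne'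
  have hvσ : (v : ℝ) = σ ^ 2 := Real.coe_toNNReal _ (sq_nonneg σ)
  set F : ℝ → ENNReal := fun u => ENNReal.ofReal (|lam + u| ^ (-s)) with hF_def
  have hFmeas : Measurable F := (aux_meas s lam hs0.ne').ennreal_ofReal
  have hfmeas : Measurable fun u : ℝ => |lam + u| ^ (-s) := aux_meas s lam hs0.ne'
  have hfnn : ∀ u : ℝ, 0 ≤ |lam + u| ^ (-s) := fun u => Real.rpow_nonneg (abs_nonneg _) _
  -- rewrite integral as toReal of lintegral
  rw [integral_eq_lintegral_of_nonneg_ae (Filter.Eventually.of_forall hfnn)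
    hfmeas.aestronglyMeasurable]
  have hCσ : (0:ℝ) ≤ (1 + 2 / (1 - s)) * σ ^ (-s) :=
    mul_nonneg hC.le (Real.rpow_nonneg hσ.le _)
  refine ENNReal.toReal_le_of_le_ofReal hCσ ?_
  -- pass to the Lebesgue density
  rw [gaussianReal_of_var_ne_zero 0 hv,
    lintegral_withDensity_eq_lintegral_mul volume (measurable_gaussianPDF 0 v) hFmeas]
  -- bound on the density
  have hpdf_le : ∀ u : ℝ, gaussianPDF 0 v u ≤ ENNReal.ofReal σ⁻¹ := by
    intro u
    refine ENNReal.ofReal_le_ofReal ?_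
    unfold gaussianPDFReal
    have hsqrt : σ ≤ Real.sqrt (2 * Real.pi * v) := by
      rw [show σ = Real.sqrt (σ ^ 2) by rw [Real.sqrt_sq hσ.le]]
      apply Real.sqrt_le_sqrt
      rw [← hvσ]
      nlinarith [Real.pi_gt_three, (v:ℝ) ≥ 0, hvσ, sq_nonneg σ]
    have h1 : (Real.sqrt (2 * Real.pi * v))⁻¹ ≤ σ⁻¹ :=
      inv_anti₀ hσ hsqrt
    have h2 : Real.exp (-(u - 0) ^ 2 / (2 * v)) ≤ 1 := by
      rw [Real.exp_le_one_iff]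
      have hvpos : (0:ℝ) < (v:ℝ) := by rw [hvσ]; positivity
      apply div_nonpos_of_nonpos_of_nonneg
      · simp [sq_nonneg]
      · positivity
    calc (Real.sqrt (2 * Real.pi * v))⁻¹ * Real.exp (-(u - 0) ^ 2 / (2 * v))
        ≤ (Real.sqrt (2 * Real.pi * v))⁻¹ * 1 := by
          apply mul_le_mul_of_nonneg_left h2 (by positivity)
      _ = (Real.sqrt (2 * Real.pi * v))⁻¹ := mul_one _
      _ ≤ σ⁻¹ := h1
  -- the interval
  set S : Set ℝ := Set.Icc (-lam - σ) (-lam + σ) with hS_def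
  have hSmeas : MeasurableSet S := measurableSet_Icc
  -- pointwise bound
  have hpt : ∀ u : ℝ, (gaussianPDF 0 v * F) u
      ≤ ENNReal.ofReal (σ ^ (-s)) * gaussianPDF 0 v u
        + S.indicator (fun u => ENNReal.ofReal σ⁻¹ * F u) u := by
    intro u
    by_cases h : |lam + u| ≤ σ
    · have hu : u ∈ S := by
        rw [abs_le] at h
        exact ⟨by linarith [h.1], by linarith [h.2]⟩
      rw [Set.indicator_of_mem hu]
      calc (gaussianPDF 0 v * F) u = gaussianPDF 0 v u * F u := rfl
        _ ≤ ENNReal.ofReal σ⁻¹ * F u := mul_le_mul_left (hpdf_le u) _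
        _ ≤ _ := le_add_self
    · push_neg at h
      have hF_le : F u ≤ ENNReal.ofReal (σ ^ (-s)) := by
        refine ENNReal.ofReal_le_ofReal ?_
        exact Real.rpow_le_rpow_of_nonpos hσ h.le (neg_nonpos.mpr hs0.le)
      calc (gaussianPDF 0 v * F) u = gaussianPDF 0 v u * F u := rfl
        _ ≤ gaussianPDF 0 v u * ENNReal.ofReal (σ ^ (-s)) := mul_le_mul_right hF_le _
        _ = ENNReal.ofReal (σ ^ (-s)) * gaussianPDF 0 v u := mul_comm _ _
        _ ≤ _ := le_self_add
  have hsplit : (∫⁻ u, (ENNReal.ofReal (σ ^ (-s)) * gaussianPDF 0 v u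
          + S.indicator (fun u => ENNReal.ofReal σ⁻¹ * F u) u))
      = ENNReal.ofReal (σ ^ (-s)) + ENNReal.ofReal σ⁻¹ * ∫⁻ u in S, F u := by
    rw [lintegral_add_left ((measurable_gaussianPDF 0 v).const_mul _),
      lintegral_const_mul _ (measurable_gaussianPDF 0 v),
      lintegral_indicator hSmeas _, lintegral_const_mul _ hFmeas,
      lintegral_gaussianPDF_eq_one 0 hv, mul_one]
  calc ∫⁻ u, (gaussianPDF 0 v * F) u
      ≤ ∫⁻ u, (ENNReal.ofReal (σ ^ (-s)) * gaussianPDF 0 v u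
          + S.indicator (fun u => ENNReal.ofReal σ⁻¹ * F u) u) := lintegral_mono hpt
    _ = ENNReal.ofReal (σ ^ (-s)) + ENNReal.ofReal σ⁻¹ * ∫⁻ u in S, F u := hsplit
    _ ≤ ENNReal.ofReal (σ ^ (-s))
          + ENNReal.ofReal σ⁻¹ * (2 * ENNReal.ofReal (σ ^ (1 - s) / (1 - s))) := by
        gcongr
        -- translate
        have htrans : ∫⁻ u in S, F u
            = ∫⁻ t in Set.Icc (-σ) σ, ENNReal.ofReal (|t| ^ (-s)) ∂volume := by
          have hmp : MeasurePreserving (fun x : ℝ => lam + x) volume volume :=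
            measurePreserving_add_left volume lam
          have hemb : MeasurableEmbedding (fun x : ℝ => lam + x) :=
            (Homeomorph.addLeft lam).measurableEmbedding
          have h := hmp.setLIntegral_comp_preimage_emb hemb
            (fun t => ENNReal.ofReal (|t| ^ (-s))) (Set.Icc (-σ) σ)
          have hpre : (fun x : ℝ => lam + x) ⁻¹' Set.Icc (-σ) σ = S := by
            ext u
            simp only [Set.mem_preimage, Set.mem_Icc, hS_def]
            constructor
            · rintro ⟨h1, h2⟩; constructor <;> linarith
            · rintro ⟨h1, h2⟩; constructor <;> linarith
          rw [hpre] at h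
          exact h
        rw [htrans]
        have hsub : Set.Icc (-σ) σ ⊆ Set.Icc (-σ) (0:ℝ) ∪ Set.Icc (0:ℝ) σ := by
          intro t ht
          rcases le_total t 0 with h0 | h0
          · exact Or.inl ⟨ht.1, h0⟩
          · exact Or.inr ⟨h0, ht.2⟩
        calc ∫⁻ t in Set.Icc (-σ) σ, ENNReal.ofReal (|t| ^ (-s)) ∂volume
            ≤ ∫⁻ t in Set.Icc (-σ) (0:ℝ) ∪ Set.Icc (0:ℝ) σ,
                ENNReal.ofReal (|t| ^ (-s)) ∂volume :=
              lintegral_mono' (Measure.restrict_mono hsub le_rfl) le_rfl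
          _ ≤ ∫⁻ t in Set.Icc (-σ) (0:ℝ), ENNReal.ofReal (|t| ^ (-s)) ∂volume
              + ∫⁻ t in Set.Icc (0:ℝ) σ, ENNReal.ofReal (|t| ^ (-s)) ∂volume :=
              lintegral_union_le _ _ _
          _ = 2 * ENNReal.ofReal (σ ^ (1 - s) / (1 - s)) := by
              rw [aux_symm, aux_lintegral_Icc s σ ⟨hs0, hs1⟩ hσ, two_mul]
    _ ≤ ENNReal.ofReal ((1 + 2 / (1 - s)) * σ ^ (-s)) := by
        have hx : (0:ℝ) ≤ σ ^ (1 - s) / (1 - s) :=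
          div_nonneg (Real.rpow_nonneg hσ.le _) h1s.le
        have hinv : (0:ℝ) ≤ σ⁻¹ := inv_nonneg.mpr hσ.le
        rw [← ENNReal.ofReal_ofNat, ← ENNReal.ofReal_mul (by norm_num : (0:ℝ) ≤ 2),
          ← ENNReal.ofReal_mul hinv,
          ← ENNReal.ofReal_add (Real.rpow_nonneg hσ.le _)
            (mul_nonneg hinv (by positivity))]
        refine ENNReal.ofReal_le_ofReal (le_of_eq ?_)
        have hkey : σ⁻¹ * σ ^ (1 - s) = σ ^ (-s) := by
          rw [← Real.rpow_neg_one σ, ← Real.rpow_add hσ,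
            show (-1:ℝ) + (1 - s) = -s by ring]
        have h2 : σ⁻¹ * (2 * (σ ^ (1 - s) / (1 - s))) = 2 / (1 - s) * σ ^ (-s) := by
          rw [← hkey]; ring
        rw [h2]; ring
end

section
/- Let d ≥ 1, let α ∈ (0,1), and let K ⊆ ℝ^d be a compact set, and let f : K → ℝ be α-Hölder continuous with constant C ≥ 0, i.e. |f(x) − f(y)| ≤ C ‖x − y‖^α for all x, y ∈ K. Then dim_H(Γ_f^K) ≤ min(dim_H(K)/α, dim_H(K) + 1 − α), where Γ_f^K = {(x, f(x)) : x ∈ K} ⊆ ℝ^d × ℝ. -/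
open MeasureTheory Set
open scoped ENNReal NNReal

lemma ediam_prod_le' {X Y : Type*} [PseudoEMetricSpace X] [PseudoEMetricSpace Y]
    (A : Set X) (B : Set Y) :
    EMetric.diam (A ×ˢ B) ≤ max (EMetric.diam A) (EMetric.diam B) :=
  EMetric.diam_le fun p hp q hq => by
    rw [Prod.edist_eq]
    exact max_le_max (EMetric.edist_le_diam_of_mem hp.1 hq.1)
      (EMetric.edist_le_diam_of_mem hp.2 hq.2)

lemma graph_hmeasure_zero {d : ℕ} {α : ℝ} (hα0 : 0 < α) (hα1 : α < 1)
    {K : Set (EuclideanSpace ℝ (Fin d))} {f : EuclideanSpace ℝ (Fin d) → ℝ} {C : ℝ} (hC : 0 ≤ C)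
    (hf : ∀ x ∈ K, ∀ y ∈ K, |f x - f y| ≤ C * ‖x - y‖ ^ α)
    {s : ℝ} (hs : 0 < s) (hK0 : μH[s] K = 0) :
    μH[s + (1 - α)] ((fun x => (x, f x)) '' K) = 0 := by
  classical
  set t : ℝ := s + (1 - α) with ht_def
  have ht : 0 < t := by dsimp [t]; linarith
  have hst : s ≤ t := by dsimp [t]; linarith
  set g : EuclideanSpace ℝ (Fin d) → EuclideanSpace ℝ (Fin d) × ℝ := fun x => (x, f x) with hg
  rw [← nonpos_iff_eq_zero, Measure.hausdorffMeasure_apply]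
  refine iSup₂_le fun r hr => ?_
  refine ENNReal.le_of_forall_pos_le_add fun ε hε _ => ?_
  rw [zero_add]
  -- a small positive budget for the K-cover
  set ε' : ℝ≥0∞ := (ε : ℝ≥0∞) / ENNReal.ofReal (2 * C + 2) with hε'_def
  have hc0 : (0 : ℝ) < 2 * C + 2 := by linarith
  have hε' : 0 < ε' := ENNReal.div_pos (by exact_mod_cast hε.ne') ENNReal.ofReal_ne_top
  -- extract a cover of K
  rw [Measure.hausdorffMeasure_apply] at hK0
  have h1 : (⨅ (U : ℕ → Set (EuclideanSpace ℝ (Fin d))) (_ : K ⊆ ⋃ n, U n)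
      (_ : ∀ n, EMetric.diam (U n) ≤ min r 1),
      ∑' n, ⨆ _ : (U n).Nonempty, EMetric.diam (U n) ^ s) < ε' := by
    refine lt_of_le_of_lt ?_ hε'
    refine le_trans ?_ hK0.le
    exact le_iSup₂ (f := fun r' (_ : 0 < r') => ⨅ (U : ℕ → Set (EuclideanSpace ℝ (Fin d))) (_ : K ⊆ ⋃ n, U n)
      (_ : ∀ n, EMetric.diam (U n) ≤ r'),
      ∑' n, ⨆ _ : (U n).Nonempty, EMetric.diam (U n) ^ s) (min r 1) (lt_min hr zero_lt_one)
  simp only [iInf_lt_iff] at h1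
  obtain ⟨U, hUcov, hUdiam, hUsum⟩ := h1
  -- data for the cover of the graph
  set dn : ℕ → ℝ := fun n => (EMetric.diam (U n)).toReal with hdn_def
  have hdfin : ∀ n, EMetric.diam (U n) ≠ ⊤ := fun n =>
    ((hUdiam n).trans_lt ((min_le_right _ _).trans_lt ENNReal.one_lt_top)).ne
  have hdofr : ∀ n, ENNReal.ofReal (dn n) = EMetric.diam (U n) := fun n =>
    ENNReal.ofReal_toReal (hdfin n)
  have hdn0 : ∀ n, 0 ≤ dn n := fun n => ENNReal.toReal_nonneg
  have hdn1 : ∀ n, dn n ≤ 1 := fun n => by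
    have := (hUdiam n).trans (min_le_right _ _)
    simpa [hdn_def] using ENNReal.toReal_mono ENNReal.one_ne_top this
  have hdist : ∀ n, ∀ x ∈ U n, ∀ y ∈ U n, dist x y ≤ dn n := fun n x hx y hy => by
    rw [dist_edist]
    exact ENNReal.toReal_mono (hdfin n) (EMetric.edist_le_diam_of_mem hx hy)
  set N : ℕ → ℕ := fun n => ⌈2 * C * dn n ^ (α - 1)⌉₊ + 1 with hN_def
  set x₀ : ℕ → EuclideanSpace ℝ (Fin d) := fun n => if h : (U n ∩ K).Nonempty then h.choose else 0 with hx₀_def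
  have hx₀mem : ∀ n, (U n ∩ K).Nonempty → x₀ n ∈ U n ∩ K := fun n h => by
    rw [hx₀_def]; simp only [dif_pos h]; exact h.choose_spec
  set a : ℕ → ℝ := fun n => f (x₀ n) - C * dn n ^ α with ha_def
  set V : ℕ × ℕ → Set (EuclideanSpace ℝ (Fin d) × ℝ) := fun p =>
    if (U p.1 ∩ K).Nonempty ∧ p.2 < N p.1 then
      (U p.1) ×ˢ Set.Icc (a p.1 + p.2 * dn p.1) (a p.1 + (p.2 + 1) * dn p.1)
    else ∅ with hV_def
  -- oscillation bound
  have hosc : ∀ n, ∀ x ∈ U n ∩ K, f x ∈ Set.Icc (a n) (a n + 2 * C * dn n ^ α) := by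
    intro n x hx
    have hne : (U n ∩ K).Nonempty := ⟨x, hx⟩
    have hx0 := hx₀mem n hne
    have h1 : |f x - f (x₀ n)| ≤ C * dn n ^ α := by
      refine (hf x hx.2 (x₀ n) hx0.2).trans ?_
      refine mul_le_mul_of_nonneg_left ?_ hC
      rw [← dist_eq_norm]
      exact Real.rpow_le_rpow dist_nonneg (hdist n x hx.1 (x₀ n) hx0.1) hα0.le
    rw [abs_sub_le_iff] at h1
    constructor
    · rw [ha_def]; dsimp only; linarith [h1.1]
    · rw [ha_def]; dsimp only; linarith [h1.2]
  -- V covers the graph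
  have hVcov : g '' K ⊆ ⋃ p : ℕ × ℕ, V p := by
    rintro _ ⟨x, hxK, rfl⟩
    obtain ⟨n, hxU⟩ : ∃ n, x ∈ U n := by simpa using hUcov hxK
    have hne : (U n ∩ K).Nonempty := ⟨x, hxU, hxK⟩
    have hfx := hosc n x ⟨hxU, hxK⟩
    have h0 : 0 ≤ f x - a n := by linarith [hfx.1]
    have h2a : f x - a n ≤ 2 * C * dn n ^ α := by linarith [hfx.2]
    set k : ℕ := ⌊(f x - a n) / dn n⌋₊ with hk_def
    rcases eq_or_lt_of_le (hdn0 n) with hd0 | hdpos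
    · -- diam zero
      have hd0 : dn n = 0 := hd0.symm
      have hfa : f x - a n = 0 := le_antisymm (by
        rw [hd0] at h2a
        simpa [Real.zero_rpow hα0.ne'] using h2a) h0
      refine mem_iUnion.2 ⟨(n, 0), ?_⟩
      simp only [hV_def]
      simp only [if_pos (⟨hne, Nat.succ_pos _⟩ : (U n ∩ K).Nonempty ∧ 0 < N n)]
      exact ⟨hxU, by constructor <;> [skip; skip] <;> simp [hd0] <;> linarith⟩
    · -- positive diam
      have hq0 : 0 ≤ (f x - a n) / dn n := div_nonneg h0 (hdn0 n)
      have hk1 : (k : ℝ) * dn n ≤ f x - a n := by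
        rw [← le_div_iff₀ hdpos]
        exact Nat.floor_le hq0
      have hk2 : f x - a n < ((k : ℝ) + 1) * dn n := by
        rw [← div_lt_iff₀ hdpos]
        exact Nat.lt_floor_add_one _
      have hkN : k < N n := by
        have hqle : (f x - a n) / dn n ≤ 2 * C * dn n ^ (α - 1) := by
          rw [div_le_iff₀ hdpos]
          calc f x - a n ≤ 2 * C * dn n ^ α := h2a
            _ = 2 * C * dn n ^ (α - 1) * dn n := by
                have hsplit : dn n ^ α = dn n ^ (α - 1) * dn n := by
                  rw [← Real.rpow_add_one hdpos.ne' (α - 1)]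
                  congr 1; ring
                rw [hsplit]; ring
        have : (k : ℝ) ≤ (2 * C * dn n ^ (α - 1)) := (Nat.floor_le hq0).trans hqle
        have : (k : ℝ) ≤ (⌈2 * C * dn n ^ (α - 1)⌉₊ : ℝ) := this.trans (Nat.le_ceil _)
        have hk' : k ≤ ⌈2 * C * dn n ^ (α - 1)⌉₊ := by exact_mod_cast this
        exact Nat.lt_succ_of_le hk'
      refine mem_iUnion.2 ⟨(n, k), ?_⟩
      simp only [hV_def]
      simp only [if_pos (⟨hne, hkN⟩ : (U n ∩ K).Nonempty ∧ k < N n)]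
      exact ⟨hxU, by constructor <;> linarith⟩
  -- diameter of pieces
  have hVdiam_le : ∀ p, EMetric.diam (V p) ≤ EMetric.diam (U p.1) := by
    intro p
    simp only [hV_def]
    split_ifs with h
    · have hh := ediam_prod_le' (U p.1) (Set.Icc (a p.1 + (p.2 : ℝ) * dn p.1) (a p.1 + ((p.2 : ℝ) + 1) * dn p.1))
      refine le_trans hh ?_
      rw [show EMetric.diam (Set.Icc (a p.1 + (p.2 : ℝ) * dn p.1) (a p.1 + ((p.2 : ℝ) + 1) * dn p.1)) = _ from Real.ediam_Icc _ _]
      have : (a p.1 + ((p.2 : ℝ) + 1) * dn p.1) - (a p.1 + (p.2 : ℝ) * dn p.1) = dn p.1 := by ring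
      rw [this, hdofr]
      exact max_le le_rfl le_rfl
    · simp [EMetric.diam]
  have hVdiam : ∀ p : ℕ × ℕ, EMetric.diam (V p) ≤ r := fun p =>
    (hVdiam_le p).trans ((hUdiam p.1).trans (min_le_left _ _))
  -- sum bound
  have hsum : ∑' p : ℕ × ℕ, EMetric.diam (V p) ^ t ≤ ε := by
    have key : ∀ n, ∑' k : ℕ, EMetric.diam (V (n, k)) ^ t ≤
        ENNReal.ofReal (2 * C + 2) * ⨆ _ : (U n).Nonempty, EMetric.diam (U n) ^ s := by
      intro n
      by_cases hne : (U n ∩ K).Nonempty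
      · have hUne : (U n).Nonempty := hne.mono inter_subset_left
        rw [iSup_pos hUne]
        have hzero : ∀ k ∉ Finset.range (N n), EMetric.diam (V (n, k)) ^ t = 0 := by
          intro k hk
          rw [Finset.mem_range, not_lt] at hk
          simp only [hV_def]
          simp only [if_neg (fun h : _ ∧ _ => absurd h.2 (not_lt.2 hk))]
          simp [EMetric.diam, ENNReal.zero_rpow_of_pos ht]
        rw [tsum_eq_sum hzero]
        have hbound : ∀ k ∈ Finset.range (N n),
            EMetric.diam (V (n, k)) ^ t ≤ EMetric.diam (U n) ^ t := fun k _ =>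
          ENNReal.rpow_le_rpow (hVdiam_le (n, k)) ht.le
        refine (Finset.sum_le_card_nsmul _ _ _ hbound).trans ?_
        rw [Finset.card_range, nsmul_eq_mul]
        -- (N n) * diam^t ≤ ofReal (2C+2) * diam^s
        rcases eq_or_lt_of_le (hdn0 n) with hd0 | hdpos
        · have : EMetric.diam (U n) = 0 := by rw [← hdofr n, ← hd0]; simp
          rw [this, ENNReal.zero_rpow_of_pos ht, mul_zero]
          exact zero_le
        · have hdiam_eq : EMetric.diam (U n) = ENNReal.ofReal (dn n) := (hdofr n).symm
          rw [hdiam_eq, ENNReal.ofReal_rpow_of_pos hdpos, ENNReal.ofReal_rpow_of_pos hdpos]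
          have hNle : ((N n : ℕ) : ℝ≥0∞) ≤ ENNReal.ofReal (2 * C * dn n ^ (α - 1) + 2) := by
            rw [← ENNReal.ofReal_natCast]
            refine ENNReal.ofReal_le_ofReal ?_
            rw [hN_def]
            push_cast
            have h1 : (⌈2 * C * dn n ^ (α - 1)⌉₊ : ℝ) < 2 * C * dn n ^ (α - 1) + 1 :=
              Nat.ceil_lt_add_one (by positivity)
            linarith
          refine (mul_le_mul_left hNle _).trans ?_
          rw [← ENNReal.ofReal_mul (by positivity)]
          refine ENNReal.ofReal_le_ofReal ?_ |>.trans
            (le_of_eq (ENNReal.ofReal_mul hc0.le))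
          have e1 : dn n ^ (α - 1) * dn n ^ t = dn n ^ s := by
            rw [← Real.rpow_add hdpos]; congr 1; rw [ht_def]; ring
          have e2 : dn n ^ t ≤ dn n ^ s :=
            Real.rpow_le_rpow_of_exponent_ge hdpos (hdn1 n) hst
          have e3 : 0 ≤ dn n ^ t := Real.rpow_nonneg (hdn0 n) t
          nlinarith [Real.rpow_nonneg (hdn0 n) s]
      · have : ∀ k : ℕ, EMetric.diam (V (n, k)) ^ t = 0 := by
          intro k
          simp only [hV_def]
          simp only [if_neg (fun h : _ ∧ _ => absurd h.1 hne)]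
          simp [EMetric.diam, ENNReal.zero_rpow_of_pos ht]
        simp [this]
    calc ∑' p : ℕ × ℕ, EMetric.diam (V p) ^ t
        = ∑' n, ∑' k, EMetric.diam (V (n, k)) ^ t := by
          exact ENNReal.tsum_prod (f := fun n k => EMetric.diam (V (n, k)) ^ t)
      _ ≤ ∑' n, ENNReal.ofReal (2 * C + 2) *
            ⨆ _ : (U n).Nonempty, EMetric.diam (U n) ^ s := ENNReal.tsum_le_tsum key
      _ = ENNReal.ofReal (2 * C + 2) *
            ∑' n, ⨆ _ : (U n).Nonempty, EMetric.diam (U n) ^ s := ENNReal.tsum_mul_left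
      _ ≤ ENNReal.ofReal (2 * C + 2) * ε' := by
          exact mul_le_mul_right hUsum.le _
      _ ≤ ε := by rw [hε'_def]; exact ENNReal.mul_div_le
  -- assemble: reindex by ℕ
  set e : ℕ ≃ ℕ × ℕ := (Denumerable.eqv (ℕ × ℕ)).symm with he_def
  set W : ℕ → Set (EuclideanSpace ℝ (Fin d) × ℝ) := fun n => V (e n) with hW_def
  have hWcov : g '' K ⊆ ⋃ n, W n := by
    rw [hW_def, e.surjective.iUnion_comp V]
    exact hVcov
  have hWdiam : ∀ n, EMetric.diam (W n) ≤ r := fun n => hVdiam (e n)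
  refine le_trans (iInf_le_of_le W (iInf_le_of_le hWcov (iInf_le _ hWdiam))) ?_
  refine le_trans ?_ hsum
  rw [← e.tsum_eq (fun p => EMetric.diam (V p) ^ t)]
  exact ENNReal.tsum_le_tsum fun n => iSup_le fun _ => le_rfl
/-- Sharp deterministic bound: the graph of an `α`-Hölder function on a compact set
`K ⊆ ℝ^d` has Hausdorff dimension at most `min(dim_H K / α, dim_H K + 1 - α)`. -/
theorem stmt10 (d : ℕ) (hd : 1 ≤ d) (α : ℝ) (hα : α ∈ Set.Ioo (0 : ℝ) 1)
    (K : Set (EuclideanSpace ℝ (Fin d))) (hK : IsCompact K)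
    (f : EuclideanSpace ℝ (Fin d) → ℝ) (C : ℝ) (hC : 0 ≤ C)
    (hf : ∀ x ∈ K, ∀ y ∈ K, |f x - f y| ≤ C * ‖x - y‖ ^ α) :
    dimH ((fun x => (x, f x)) '' K) ≤
      min (dimH K / ENNReal.ofReal α) (dimH K + ENNReal.ofReal (1 - α)) := by
  obtain ⟨hα0, hα1⟩ := hα
  refine le_min ?_ ?_
  · -- Hölder bound
    have hb : Bornology.IsBounded K := hK.isBounded
    set D : ℝ := Metric.diam K with hD
    have hD0 : 0 ≤ D := Metric.diam_nonneg
    set M : ℝ := max C (D ^ (1 - α)) with hM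
    have hM0 : 0 ≤ M := le_max_of_le_left hC
    have hold : HolderOnWith M.toNNReal α.toNNReal (fun x => (x, f x)) K := by
      intro x hx y hy
      have hu0 : (0 : ℝ) ≤ dist x y := dist_nonneg
      have huD : dist x y ≤ D := Metric.dist_le_diam_of_mem hb hx hy
      have h1 : dist x y ≤ M * dist x y ^ α := by
        rcases eq_or_lt_of_le hu0 with h0 | hpos
        · rw [← h0, Real.zero_rpow hα0.ne', mul_zero]
        · have heq : dist x y = dist x y ^ (1 - α) * dist x y ^ α := by
            rw [← Real.rpow_add hpos]
            norm_num
          calc dist x y = dist x y ^ (1 - α) * dist x y ^ α := heq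
            _ ≤ M * dist x y ^ α :=
              mul_le_mul_of_nonneg_right
                (le_max_of_le_right (Real.rpow_le_rpow hu0 huD (by linarith)))
                (Real.rpow_nonneg hu0 α)
      have h2 : dist (f x) (f y) ≤ M * dist x y ^ α := by
        rw [Real.dist_eq]
        refine (hf x hx y hy).trans ?_
        rw [← dist_eq_norm]
        exact mul_le_mul_of_nonneg_right (le_max_left _ _) (Real.rpow_nonneg hu0 α)
      have hcoe : ((α.toNNReal : ℝ)) = α := Real.coe_toNNReal α hα0.le
      rw [Prod.edist_eq, hcoe]
      refine sup_le ?_ ?_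
      · show edist x y ≤ (M.toNNReal : ℝ≥0∞) * edist x y ^ α
        calc edist x y = ENNReal.ofReal (dist x y) := edist_dist x y
          _ ≤ ENNReal.ofReal (M * dist x y ^ α) := ENNReal.ofReal_le_ofReal h1
          _ = (M.toNNReal : ℝ≥0∞) * edist x y ^ α := by
              rw [ENNReal.ofReal_mul hM0, edist_dist x y,
                ENNReal.ofReal_rpow_of_nonneg hu0 hα0.le]
              rfl
      · show edist (f x) (f y) ≤ (M.toNNReal : ℝ≥0∞) * edist x y ^ α
        calc edist (f x) (f y) = ENNReal.ofReal (dist (f x) (f y)) := edist_dist _ _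
          _ ≤ ENNReal.ofReal (M * dist x y ^ α) := ENNReal.ofReal_le_ofReal h2
          _ = (M.toNNReal : ℝ≥0∞) * edist x y ^ α := by
              rw [ENNReal.ofReal_mul hM0, edist_dist x y,
                ENNReal.ofReal_rpow_of_nonneg hu0 hα0.le]
              rfl
    have hr0 : 0 < α.toNNReal := Real.toNNReal_pos.mpr hα0
    have := hold.dimH_image_le hr0
    rwa [show ((α.toNNReal : ℝ≥0∞)) = ENNReal.ofReal α from rfl] at this
  · -- covering bound
    have hKtop : dimH K ≠ ⊤ := by
      refine ne_top_of_le_ne_top ?_ (dimH_mono (Set.subset_univ K))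
      rw [Real.dimH_univ_eq_finrank (EuclideanSpace ℝ (Fin d))]
      exact ENNReal.natCast_ne_top _
    refine ENNReal.le_of_forall_pos_le_add fun ε hε _ => ?_
    have hlt : dimH K < dimH K + ε :=
      ENNReal.lt_add_right hKtop (by exact_mod_cast hε.ne')
    obtain ⟨s', h1, h2⟩ := ENNReal.lt_iff_exists_nnreal_btwn.mp hlt
    have hs'0 : 0 < (s' : ℝ) := by
      have : (0 : ℝ≥0∞) < (s' : ℝ≥0∞) := (zero_le : (0 : ℝ≥0∞) ≤ dimH K).trans_lt h1
      exact_mod_cast this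
    have hm : μH[(s' : ℝ)] K = 0 := hausdorffMeasure_of_dimH_lt h1
    have hz := graph_hmeasure_zero hα0 hα1 hC hf hs'0 hm
    have ht0 : (0 : ℝ) ≤ (s' : ℝ) + (1 - α) := by linarith
    have hdim : dimH ((fun x => (x, f x)) '' K) ≤
        (((s' : ℝ) + (1 - α)).toNNReal : ℝ≥0∞) := by
      refine dimH_le_of_hausdorffMeasure_ne_top ?_
      rw [show (((((s' : ℝ) + (1 - α)).toNNReal : ℝ≥0)) : ℝ) = (s' : ℝ) + (1 - α) from
        Real.coe_toNNReal _ ht0]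
      rw [hz]
      exact ENNReal.zero_ne_top
    refine hdim.trans ?_
    rw [show ((((s' : ℝ) + (1 - α)).toNNReal : ℝ≥0∞)) = ENNReal.ofReal ((s' : ℝ) + (1 - α))
      from rfl]
    rw [ENNReal.ofReal_add s'.coe_nonneg (by linarith), ENNReal.ofReal_coe_nnreal]
    calc (s' : ℝ≥0∞) + ENNReal.ofReal (1 - α)
        ≤ (dimH K + ε) + ENNReal.ofReal (1 - α) := add_le_add_left h2.le _
      _ = dimH K + ENNReal.ofReal (1 - α) + ε := by ring
end

section
/- The set {f ∈ C([0,1], ℝ) : dim_H(Γ_f^{[0,1]}) = 1} is comeagre (i.e. contains a countable intersection of dense open sets) in the Banach space C([0,1], ℝ) of continuous real-valued functions on [0,1] equipped with the supremum norm. In other words, for quasi-all continuous functions f on [0,1], the Hausdorff dimension of the graph of f equals 1. -/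
open Set Metric MeasureTheory Topology NNReal ENNReal Bornology

noncomputable section MW1986

/-- The graph of `f : C([0,1], ℝ)` as a subset of `ℝ × ℝ`. -/
def MWgraph (f : C(Set.Icc (0:ℝ) 1, ℝ)) : Set (ℝ × ℝ) :=
  Set.range fun x : Set.Icc (0:ℝ) 1 => ((x : ℝ), f x)

lemma MWgraph_isCompact (f : C(Set.Icc (0:ℝ) 1, ℝ)) : IsCompact (MWgraph f) :=
  isCompact_range (continuous_subtype_val.prodMk f.continuous)

lemma MW_one_le_dimH (f : C(Set.Icc (0:ℝ) 1, ℝ)) : 1 ≤ dimH (MWgraph f) := by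
  have h1 : Prod.fst '' MWgraph f = Set.Icc (0:ℝ) 1 := by
    rw [MWgraph, ← Set.range_comp]
    exact Subtype.range_coe
  have h2 : dimH (Prod.fst '' MWgraph f) ≤ dimH (MWgraph f) :=
    LipschitzWith.dimH_image_le LipschitzWith.prod_fst _
  have h3 : dimH (Set.Icc (0:ℝ) 1) = 1 := by
    rw [Real.dimH_of_nonempty_interior (s := Set.Icc (0:ℝ) 1)
      (by rw [interior_Icc]; exact ⟨1/2, by norm_num, by norm_num⟩),
      Module.finrank_self, Nat.cast_one]
  calc (1 : ℝ≥0∞) = dimH (Set.Icc (0:ℝ) 1) := h3.symm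
    _ = dimH (Prod.fst '' MWgraph f) := by rw [h1]
    _ ≤ dimH (MWgraph f) := h2

lemma MW_exists_pos_ofReal_le {c : ℝ≥0∞} (hc : c ≠ 0) :
    ∃ b : ℝ, 0 < b ∧ ENNReal.ofReal b ≤ c := by
  rcases eq_or_ne c ∞ with h | h
  · exact ⟨1, one_pos, by simp [h]⟩
  · exact ⟨c.toReal, ENNReal.toReal_pos hc h, by rw [ENNReal.ofReal_toReal h]⟩

lemma MW_add_rpow_le (a b : ℝ≥0∞) {s : ℝ} (hs : 0 ≤ s) :
    (a + b) ^ s ≤ 2 ^ s * (a ^ s + b ^ s) := by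
  rcases le_total a b with h | h
  · calc (a + b) ^ s ≤ (2 * b) ^ s :=
        ENNReal.rpow_le_rpow (by rw [two_mul]; exact add_le_add_left h _) hs
      _ = 2 ^ s * b ^ s := ENNReal.mul_rpow_of_nonneg _ _ hs
      _ ≤ 2 ^ s * (a ^ s + b ^ s) := mul_le_mul_right le_add_self _
  · calc (a + b) ^ s ≤ (2 * a) ^ s :=
        ENNReal.rpow_le_rpow (by rw [two_mul]; exact add_le_add_right h _) hs
      _ = 2 ^ s * a ^ s := ENNReal.mul_rpow_of_nonneg _ _ hs
      _ ≤ 2 ^ s * (a ^ s + b ^ s) := mul_le_mul_right le_self_add _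

/-- From a compact set of zero `s`-dimensional Hausdorff measure, extract a finite cover by
small balls whose `s`-dimensional cost is at most `1`. -/
lemma MW_exists_finite_ball_cover {K : Set (ℝ × ℝ)} (hK : IsCompact K) {s : ℝ≥0} (hs : 1 < s)
    (hμ : μH[(s:ℝ)] K = 0) {ε : ℝ} (hε : 0 < ε) :
    ∃ (I : Finset ℕ) (c : ℕ → ℝ × ℝ) (ρ : ℕ → ℝ),
      (∀ i ∈ I, 0 < ρ i ∧ ρ i ≤ ε) ∧ (K ⊆ ⋃ i ∈ I, Metric.ball (c i) (ρ i)) ∧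
      ∑ i ∈ I, ENNReal.ofReal (2 * ρ i) ^ (s : ℝ) ≤ 1 := by
  classical
  have hs1 : (1:ℝ) < (s:ℝ) := by exact_mod_cast hs
  have hs0 : (0:ℝ) < (s:ℝ) := lt_trans one_pos hs1
  set A : ℝ≥0∞ := 2 ^ (s:ℝ) with hA
  have hA0 : A ≠ 0 := (ENNReal.rpow_pos (by norm_num) (by norm_num)).ne'
  have hAtop : A ≠ ∞ := ENNReal.rpow_ne_top_of_nonneg hs0.le (by norm_num)
  set β : ℝ≥0∞ := (A * A)⁻¹ * 2⁻¹ with hβ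
  have hβ0 : 0 < β := by
    refine ENNReal.mul_pos ?_ (by norm_num)
    exact ENNReal.inv_ne_zero.mpr (ENNReal.mul_ne_top hAtop hAtop)
  set B : ℝ≥0∞ := A⁻¹ * 2⁻¹ * 2⁻¹ with hB
  have hB0 : B ≠ 0 := by
    refine mul_ne_zero (mul_ne_zero ?_ (by norm_num)) (by norm_num)
    exact ENNReal.inv_ne_zero.mpr hAtop
  have hBtop : B ≠ ∞ := by
    refine ENNReal.mul_ne_top (ENNReal.mul_ne_top ?_ (by norm_num)) (by norm_num)
    exact ENNReal.inv_ne_top.mpr hA0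
  obtain ⟨b, hb0, hbB⟩ := MW_exists_pos_ofReal_le (c := B ^ (s:ℝ)⁻¹)
    (ENNReal.rpow_pos (pos_iff_ne_zero.mpr hB0) hBtop).ne'
  have hbs : ENNReal.ofReal b ^ (s:ℝ) ≤ B := by
    calc ENNReal.ofReal b ^ (s:ℝ) ≤ (B ^ (s:ℝ)⁻¹) ^ (s:ℝ) := ENNReal.rpow_le_rpow hbB hs0.le
      _ = B := by rw [← ENNReal.rpow_mul, inv_mul_cancel₀ hs0.ne', ENNReal.rpow_one]
  set ε₀ : ℝ := min b (ε/2) with hε₀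
  have hε₀0 : 0 < ε₀ := lt_min hb0 (half_pos hε)
  have hε₀s : ENNReal.ofReal ε₀ ^ (s:ℝ) ≤ B :=
    le_trans (ENNReal.rpow_le_rpow (ENNReal.ofReal_le_ofReal (min_le_left _ _)) hs0.le) hbs
  -- extract a countable cover at scale `ε/2` with tiny `s`-cost
  have h0 : (⨅ (t : ℕ → Set (ℝ × ℝ)) (_ : K ⊆ ⋃ n, t n)
      (_ : ∀ n, EMetric.diam (t n) ≤ ENNReal.ofReal (ε/2)),
      ∑' n, ⨆ _ : (t n).Nonempty, EMetric.diam (t n) ^ (s:ℝ)) < β := by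
    refine lt_of_le_of_lt ?_ hβ0
    have happly := MeasureTheory.Measure.hausdorffMeasure_apply (s:ℝ) K
    rw [hμ] at happly
    calc _ ≤ (0:ℝ≥0∞) := by
          rw [happly]
          exact le_iSup₂ (f := fun (r : ℝ≥0∞) (_ : 0 < r) =>
            ⨅ (t : ℕ → Set (ℝ × ℝ)) (_ : K ⊆ ⋃ n, t n)
              (_ : ∀ n, EMetric.diam (t n) ≤ r),
              ∑' n, ⨆ _ : (t n).Nonempty, EMetric.diam (t n) ^ (s:ℝ))
            (ENNReal.ofReal (ε/2)) (by simp [half_pos hε])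
      _ = 0 := rfl
  obtain ⟨t, h1⟩ := iInf_lt_iff.mp h0
  obtain ⟨hcov, h2⟩ := iInf_lt_iff.mp h1
  obtain ⟨hdm, hsum⟩ := iInf_lt_iff.mp h2
  have hdtop : ∀ n, EMetric.diam (t n) ≠ ∞ :=
    fun n => (lt_of_le_of_lt (hdm n) ENNReal.ofReal_lt_top).ne
  set x : ℕ → ℝ × ℝ := fun n => if h : (t n).Nonempty then h.choose else (0, 0) with hx
  set ρ : ℕ → ℝ := fun n => Metric.diam (t n) + ε₀ * (1/2)^(n+1) with hρdef
  have hρpos : ∀ n, 0 < ρ n := fun n =>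
    add_pos_of_nonneg_of_pos Metric.diam_nonneg (by positivity)
  have hdiam_le : ∀ n, Metric.diam (t n) ≤ ε/2 := fun n =>
    ENNReal.toReal_le_of_le_ofReal (half_pos hε).le (hdm n)
  have hρ_le : ∀ n, ρ n ≤ ε := by
    intro n
    have h2' : ε₀ * (1/2)^(n+1) ≤ ε/2 := by
      calc ε₀ * (1/2)^(n+1) ≤ ε₀ * 1 :=
            mul_le_mul_of_nonneg_left (pow_le_one₀ (by norm_num) (by norm_num)) hε₀0.le
        _ = ε₀ := mul_one _
        _ ≤ ε/2 := min_le_right _ _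
    have := hdiam_le n
    simp only [hρdef]; linarith
  have hsub : ∀ n, t n ⊆ Metric.ball (x n) (ρ n) := by
    intro n z hz
    have hne : (t n).Nonempty := ⟨z, hz⟩
    have hxmem : x n ∈ t n := by
      simp only [hx, dif_pos hne]; exact hne.choose_spec
    have hbd : IsBounded (t n) := Metric.isBounded_iff_ediam_ne_top.mpr (hdtop n)
    have hd := Metric.dist_le_diam_of_mem hbd hz hxmem
    have : dist z (x n) < ρ n :=
      lt_of_le_of_lt hd (lt_add_of_pos_right _ (by positivity))
    exact Metric.mem_ball.mpr this
  have hKsub : K ⊆ ⋃ n, Metric.ball (x n) (ρ n) :=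
    hcov.trans (Set.iUnion_mono hsub)
  obtain ⟨I, hI⟩ := hK.elim_finite_subcover (fun n => Metric.ball (x n) (ρ n))
    (fun n => Metric.isOpen_ball) hKsub
  refine ⟨I, x, ρ, fun i _ => ⟨hρpos i, hρ_le i⟩, hI, ?_⟩
  -- cost estimate
  have hofReal_half : ENNReal.ofReal (1/2 : ℝ) = (2:ℝ≥0∞)⁻¹ := by
    rw [one_div, ENNReal.ofReal_inv_of_pos (by norm_num)]
    norm_num
  have key : ∀ n, ENNReal.ofReal (2 * ρ n) ^ (s:ℝ) ≤
      A * A * EMetric.diam (t n) ^ (s:ℝ)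
        + A * (ENNReal.ofReal ε₀ ^ (s:ℝ) * (2:ℝ≥0∞)⁻¹ ^ n) := by
    intro n
    have e1 : ENNReal.ofReal (2 * ρ n) =
        2 * EMetric.diam (t n) + ENNReal.ofReal ε₀ * (2:ℝ≥0∞)⁻¹ ^ n := by
      have : 2 * ρ n = 2 * Metric.diam (t n) + ε₀ * (1/2)^n := by
        simp only [hρdef]; ring
      rw [this, ENNReal.ofReal_add (by positivity) (by positivity),
        ENNReal.ofReal_mul (by norm_num), ENNReal.ofReal_mul hε₀0.le,
        ENNReal.ofReal_pow (by norm_num), hofReal_half]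
      have : ENNReal.ofReal (Metric.diam (t n)) = EMetric.diam (t n) :=
        ENNReal.ofReal_toReal (hdtop n)
      rw [this, ENNReal.ofReal_ofNat]
    rw [e1]
    calc (2 * EMetric.diam (t n) + ENNReal.ofReal ε₀ * (2:ℝ≥0∞)⁻¹ ^ n) ^ (s:ℝ)
        ≤ 2 ^ (s:ℝ) * ((2 * EMetric.diam (t n)) ^ (s:ℝ)
            + (ENNReal.ofReal ε₀ * (2:ℝ≥0∞)⁻¹ ^ n) ^ (s:ℝ)) :=
          MW_add_rpow_le _ _ hs0.le
      _ ≤ A * (A * EMetric.diam (t n) ^ (s:ℝ)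
            + ENNReal.ofReal ε₀ ^ (s:ℝ) * (2:ℝ≥0∞)⁻¹ ^ n) := by
          rw [hA]
          refine mul_le_mul_right (add_le_add ?_ ?_) _
          · rw [ENNReal.mul_rpow_of_nonneg _ _ hs0.le]
          · rw [ENNReal.mul_rpow_of_nonneg _ _ hs0.le]
            refine mul_le_mul_right ?_ _
            calc ((2:ℝ≥0∞)⁻¹ ^ n) ^ (s:ℝ) ≤ ((2:ℝ≥0∞)⁻¹ ^ n) ^ (1:ℝ) :=
                ENNReal.rpow_le_rpow_of_exponent_ge
                  (pow_le_one' (by simp [ENNReal.inv_le_one]) n) hs1.le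
              _ = (2:ℝ≥0∞)⁻¹ ^ n := ENNReal.rpow_one _
      _ = A * A * EMetric.diam (t n) ^ (s:ℝ)
            + A * (ENNReal.ofReal ε₀ ^ (s:ℝ) * (2:ℝ≥0∞)⁻¹ ^ n) := by ring
  have hsum_diam : ∑' n, EMetric.diam (t n) ^ (s:ℝ) ≤ β := by
    refine le_of_lt (lt_of_le_of_lt (le_of_eq ?_) hsum)
    refine tsum_congr fun n => ?_
    rcases eq_empty_or_nonempty (t n) with h | h
    · simp [h, EMetric.diam_empty, ENNReal.zero_rpow_of_pos hs0]
      exact ⟨EMetric.diam_empty, by exact_mod_cast hs0⟩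
    · rw [iSup_pos h]
  calc ∑ i ∈ I, ENNReal.ofReal (2 * ρ i) ^ (s:ℝ)
      ≤ ∑' n, ENNReal.ofReal (2 * ρ n) ^ (s:ℝ) := ENNReal.sum_le_tsum I
    _ ≤ ∑' n, (A * A * EMetric.diam (t n) ^ (s:ℝ)
          + A * (ENNReal.ofReal ε₀ ^ (s:ℝ) * (2:ℝ≥0∞)⁻¹ ^ n)) :=
        ENNReal.tsum_le_tsum key
    _ = A * A * (∑' n, EMetric.diam (t n) ^ (s:ℝ))
          + A * (ENNReal.ofReal ε₀ ^ (s:ℝ) * ∑' n, (2:ℝ≥0∞)⁻¹ ^ n) := by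
        rw [ENNReal.tsum_add, ENNReal.tsum_mul_left, ENNReal.tsum_mul_left,
          ENNReal.tsum_mul_left]
    _ ≤ A * A * β + A * (B * 2) := by
        have hgeo : ∑' n, (2:ℝ≥0∞)⁻¹ ^ n = 2 := by
          rw [ENNReal.tsum_geometric, ENNReal.one_sub_inv_two, inv_inv]
        rw [hgeo]
        gcongr
    _ = 2⁻¹ + 2⁻¹ := by
        congr 1
        · rw [hβ, ← mul_assoc, ENNReal.mul_inv_cancel
            (mul_ne_zero hA0 hA0) (ENNReal.mul_ne_top hAtop hAtop), one_mul]
        · rw [hB]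
          calc A * (A⁻¹ * 2⁻¹ * 2⁻¹ * 2) = (A * A⁻¹) * ((2:ℝ≥0∞)⁻¹ * 2) * 2⁻¹ := by ring
            _ = 2⁻¹ := by
              rw [ENNReal.mul_inv_cancel hA0 hAtop,
                ENNReal.inv_mul_cancel (by norm_num) (by norm_num), one_mul, one_mul]
    _ = 1 := by
        rw [← two_mul, ENNReal.mul_inv_cancel (by norm_num) (by norm_num)]

/-- The basic open dense sets. -/
def MWU (s : ℝ≥0) (m : ℕ) : Set C(Set.Icc (0:ℝ) 1, ℝ) :=
  {f | ∃ (I : Finset ℕ) (c : ℕ → ℝ × ℝ) (ρ : ℕ → ℝ),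
    (∀ i ∈ I, 0 < ρ i ∧ ρ i ≤ 1/(m+1)) ∧
    (MWgraph f ⊆ ⋃ i ∈ I, Metric.ball (c i) (ρ i)) ∧
    ∑ i ∈ I, ENNReal.ofReal (2 * ρ i) ^ (s : ℝ) ≤ 1}

lemma MWU_isOpen (s : ℝ≥0) (m : ℕ) : IsOpen (MWU s m) := by
  rw [Metric.isOpen_iff]
  rintro f ⟨I, c, ρ, hρ, hcov, hsum⟩
  have hO : IsOpen (⋃ i ∈ I, Metric.ball (c i) (ρ i)) :=
    isOpen_biUnion fun i _ => Metric.isOpen_ball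
  obtain ⟨δ, hδ0, hδ⟩ := (MWgraph_isCompact f).exists_thickening_subset_open hO hcov
  refine ⟨δ, hδ0, fun g hg => ⟨I, c, ρ, hρ, ?_, hsum⟩⟩
  rintro _ ⟨x, rfl⟩
  apply hδ
  rw [Metric.mem_thickening_iff]
  refine ⟨((x:ℝ), f x), ⟨x, rfl⟩, ?_⟩
  have h1 : dist ((x:ℝ), g x) ((x:ℝ), f x) = dist (g x) (f x) := by
    rw [Prod.dist_eq, dist_self, max_eq_right dist_nonneg]
  rw [h1]
  exact lt_of_le_of_lt (ContinuousMap.dist_apply_le_dist x) (Metric.mem_ball.mp hg)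

lemma MWU_dense {s : ℝ≥0} (hs : 1 < s) (m : ℕ) : Dense (MWU s m) := by
  rw [Metric.dense_iff]
  intro f r hr
  have hmem : f ∈ closure (polynomialFunctions (Set.Icc (0:ℝ) 1) : Set C(Set.Icc (0:ℝ) 1, ℝ)) := by
    rw [← Subalgebra.topologicalClosure_coe, polynomialFunctions_closure_eq_top (0:ℝ) 1]
    trivial
  obtain ⟨p, hpmem, hpf⟩ := Metric.mem_closure_iff.mp hmem r hr
  rw [polynomialFunctions_coe] at hpmem
  obtain ⟨q, rfl⟩ := hpmem
  set p : C(Set.Icc (0:ℝ) 1, ℝ) := Polynomial.toContinuousMapOnAlgHom (Set.Icc (0:ℝ) 1) q with hp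
  have hF : ContDiff ℝ 1 (fun x : ℝ => ((x, q.eval x) : ℝ × ℝ)) := by
    refine contDiff_id.prodMk ?_
    rw [contDiff_one_iff_deriv]
    refine ⟨q.differentiable, ?_⟩
    have : deriv (fun x : ℝ => q.eval x) = fun x => q.derivative.eval x := by
      funext x; exact Polynomial.deriv q
    rw [this]
    exact q.derivative.continuous
  have hdim : dimH (MWgraph p) ≤ 1 := by
    have hsub : MWgraph p ⊆ Set.range (fun x : ℝ => ((x, q.eval x) : ℝ × ℝ)) := by
      rintro _ ⟨x, rfl⟩
      exact ⟨(x:ℝ), by simp [hp]⟩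
    calc dimH (MWgraph p) ≤ dimH (Set.range (fun x : ℝ => ((x, q.eval x) : ℝ × ℝ))) :=
        dimH_mono hsub
      _ ≤ (Module.finrank ℝ ℝ : ℝ≥0∞) := hF.dimH_range_le
      _ = 1 := by rw [Module.finrank_self, Nat.cast_one]
  have hμ : μH[(s:ℝ)] (MWgraph p) = 0 :=
    hausdorffMeasure_of_dimH_lt (lt_of_le_of_lt hdim (by exact_mod_cast hs))
  obtain ⟨I, c, ρ, hρ, hcov, hsum⟩ := MW_exists_finite_ball_cover (MWgraph_isCompact p) hs hμ
    (ε := 1/(m+1)) (by positivity)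
  exact ⟨p, Metric.mem_ball.mpr (by rw [dist_comm]; exact hpf), I, c, ρ, hρ, hcov, hsum⟩

lemma MW_hausdorff_le_one {s : ℝ≥0} (hs0 : (0:ℝ) < (s:ℝ)) (f : C(Set.Icc (0:ℝ) 1, ℝ))
    (hf : ∀ m : ℕ, f ∈ MWU s m) : μH[(s:ℝ)] (MWgraph f) ≤ 1 := by
  classical
  rw [MeasureTheory.Measure.hausdorffMeasure_apply]
  refine iSup₂_le fun r hr => ?_
  obtain ⟨b, hb0, hbr⟩ := MW_exists_pos_ofReal_le hr.ne'
  obtain ⟨m, hm⟩ := exists_nat_gt (2/b)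
  have hmb : (2/(m+1) : ℝ) ≤ b := by
    rw [div_le_iff₀ (by positivity)]
    have h2b : 2/b < (m:ℝ) + 1 := lt_of_lt_of_le hm (by linarith)
    calc (2:ℝ) = (2/b) * b := by field_simp
      _ ≤ ((m:ℝ)+1) * b := by nlinarith
      _ = b * ((m:ℝ)+1) := by ring
  obtain ⟨I, c, ρ, hρ, hcov, hsum⟩ := hf m
  set t : ℕ → Set (ℝ × ℝ) := fun n => if n ∈ I then Metric.ball (c n) (ρ n) else ∅ with ht
  have hball_diam : ∀ n ∈ I, EMetric.diam (Metric.ball (c n) (ρ n)) ≤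
      ENNReal.ofReal (2 * ρ n) := by
    intro n hn
    calc EMetric.diam (Metric.ball (c n) (ρ n)) ≤ 2 * ENNReal.ofReal (ρ n) := by
          rw [← Metric.emetric_ball]; exact EMetric.diam_ball
      _ = ENNReal.ofReal (2 * ρ n) := by
          rw [ENNReal.ofReal_mul (by norm_num), ENNReal.ofReal_ofNat]
  have hdm : ∀ n, EMetric.diam (t n) ≤ r := by
    intro n
    by_cases h : n ∈ I
    · rw [ht]; simp only [if_pos h]
      refine le_trans (hball_diam n h) (le_trans ?_ hbr)
      refine ENNReal.ofReal_le_ofReal ?_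
      have := (hρ n h).2
      calc 2 * ρ n ≤ 2 * (1/(m+1)) := by linarith
        _ = 2/(m+1) := by ring
        _ ≤ b := hmb
    · rw [ht]; simp [if_neg h]
      exact EMetric.diam_empty.le.trans bot_le
  have hcov' : MWgraph f ⊆ ⋃ n, t n := by
    intro z hz
    obtain ⟨i, hiI, hi⟩ := Set.mem_iUnion₂.mp (hcov hz)
    refine Set.mem_iUnion.mpr ⟨i, ?_⟩
    rw [ht]; simp only [if_pos hiI]; exact hi
  refine iInf_le_of_le t (iInf_le_of_le hcov' (iInf_le_of_le hdm ?_))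
  calc ∑' n, ⨆ _ : (t n).Nonempty, EMetric.diam (t n) ^ (s:ℝ)
      ≤ ∑' n, (if n ∈ I then ENNReal.ofReal (2 * ρ n) ^ (s:ℝ) else 0) := by
        refine ENNReal.tsum_le_tsum fun n => ?_
        by_cases h : n ∈ I
        · rw [if_pos h]
          refine iSup_le fun _ => ENNReal.rpow_le_rpow ?_ hs0.le
          rw [ht]; simp only [if_pos h]; exact hball_diam n h
        · rw [if_neg h]
          refine iSup_le fun hne => ?_
          rw [ht] at hne
          simp [if_neg h] at hne
    _ = ∑ i ∈ I, ENNReal.ofReal (2 * ρ i) ^ (s:ℝ) := by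
        rw [tsum_eq_sum (s := I) (fun n hn => if_neg hn)]
        exact Finset.sum_congr rfl fun i hi => if_pos hi
    _ ≤ 1 := hsum

/-- Mauldin–Williams: for quasi-all `f ∈ C([0,1])` (in the sense of Baire category for
the supremum-norm topology), the graph of `f` has Hausdorff dimension `1`. -/
theorem stmt11 :
    {f : C(Set.Icc (0 : ℝ) 1, ℝ) |
        dimH (Set.range fun x : Set.Icc (0 : ℝ) 1 => ((x : ℝ), f x)) = 1} ∈
      residual C(Set.Icc (0 : ℝ) 1, ℝ) := by
  have hslt : ∀ k : ℕ, (1:ℝ≥0) < 1 + ((k:ℝ≥0)+1)⁻¹ := by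
    intro k
    have : (0:ℝ≥0) < ((k:ℝ≥0)+1)⁻¹ := by positivity
    exact lt_add_of_pos_right 1 this
  have key : (⋂ (k : ℕ) (m : ℕ), MWU (1 + ((k:ℝ≥0)+1)⁻¹) m) ∈
      residual C(Set.Icc (0 : ℝ) 1, ℝ) := by
    refine (countable_iInter_mem).mpr fun k => ?_
    refine (countable_iInter_mem).mpr fun m => ?_
    exact residual_of_dense_open (MWU_isOpen _ _) (MWU_dense (hslt k) m)
  refine Filter.mem_of_superset key fun f hf => ?_
  simp only [Set.mem_iInter] at hf
  show dimH (Set.range fun x : Set.Icc (0 : ℝ) 1 => ((x : ℝ), f x)) = 1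
  have hge : 1 ≤ dimH (MWgraph f) := MW_one_le_dimH f
  have hle : dimH (MWgraph f) ≤ 1 := by
    refine ENNReal.le_of_forall_pos_le_add fun ε hε _ => ?_
    have hε' : (0:ℝ) < (ε:ℝ) := hε
    obtain ⟨k, hk⟩ := exists_nat_gt ((ε:ℝ)⁻¹)
    have hkε : (((k:ℝ≥0)+1)⁻¹ : ℝ≥0) ≤ ε := by
      rw [← NNReal.coe_le_coe]
      push_cast
      rw [inv_le_comm₀ (by positivity) hε']
      exact le_of_lt (lt_of_lt_of_le hk (by linarith))
    set sk : ℝ≥0 := 1 + ((k:ℝ≥0)+1)⁻¹ with hsk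
    have hs0 : (0:ℝ) < (sk:ℝ) := by
      rw [hsk]; push_cast; positivity
    have hμ : μH[(sk:ℝ)] (MWgraph f) ≤ 1 :=
      MW_hausdorff_le_one hs0 f (fun m => hf k m)
    have hdim : dimH (MWgraph f) ≤ (sk : ℝ≥0∞) :=
      dimH_le_of_hausdorffMeasure_ne_top (ne_top_of_le_ne_top one_ne_top hμ)
    calc dimH (MWgraph f) ≤ (sk : ℝ≥0∞) := hdim
      _ = 1 + ((((k:ℝ≥0)+1)⁻¹ : ℝ≥0) : ℝ≥0∞) := by rw [hsk, ENNReal.coe_add, ENNReal.coe_one]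
      _ ≤ 1 + (ε : ℝ≥0∞) := by
          exact add_le_add_right (by exact_mod_cast hkε) 1
  exact le_antisymm hle hge

end MW1986
end

section
/- Every continuous function f : [0,1] → ℝ can be written as f = f₁ − f₂ where f₁ and f₂ are continuous functions on [0,1] whose graphs both have Hausdorff dimension 1, i.e. dim_H(Γ_{f₁}^{[0,1]}) = 1 and dim_H(Γ_{f₂}^{[0,1]}) = 1. -/
open Set Metric MeasureTheory ENNReal Topology NNReal

noncomputable section
namespace Stmt13Aux

abbrev X13 := C(Set.Icc (0:ℝ) 1, ℝ)


def gr (g : X13) : Set (ℝ × ℝ) := Set.range fun x : Set.Icc (0:ℝ) 1 => ((x : ℝ), g x)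

lemma isCompact_gr (g : X13) : IsCompact (gr g) :=
  isCompact_range (continuous_subtype_val.prodMk g.continuous)

lemma one_le_dimH_gr (g : X13) : 1 ≤ dimH (gr g) := by
  have h1 : (Prod.fst '' gr g) = Set.Icc (0:ℝ) 1 := by
    rw [gr, ← Set.range_comp]
    have : (Prod.fst ∘ fun x : Set.Icc (0:ℝ) 1 => ((x : ℝ), g x)) =
        (Subtype.val : Set.Icc (0:ℝ) 1 → ℝ) := rfl
    rw [this, Subtype.range_coe]
  have h2 : dimH (Prod.fst '' gr g) ≤ dimH (gr g) :=
    LipschitzWith.prod_fst.dimH_image_le _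
  rw [h1] at h2
  have h3 : dimH (Set.Icc (0:ℝ) 1) = 1 := by
    have := Real.dimH_of_mem_nhds (x := (1/2:ℝ)) (s := Set.Icc (0:ℝ) 1)
      (Icc_mem_nhds (by norm_num) (by norm_num))
    simpa using this
  rwa [h3] at h2

/-- the set of functions whose graph has a fine cheap cover -/
def U (s : ℝ) (c : ℝ≥0∞) : Set X13 :=
  {g | ∃ t : ℕ → Set (ℝ × ℝ), (∀ i, IsOpen (t i)) ∧ (gr g ⊆ ⋃ i, t i) ∧
    (∀ i, EMetric.diam (t i) ≤ c) ∧ ∑' i, EMetric.diam (t i) ^ s < c}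

lemma isOpen_U (s : ℝ) (c : ℝ≥0∞) : IsOpen (U s c) := by
  rw [Metric.isOpen_iff]
  rintro g ⟨t, hto, hcov, hdiam, hsum⟩
  obtain ⟨δ, hδ, hball⟩ := lebesgue_number_lemma_of_metric (isCompact_gr g) hto hcov
  refine ⟨δ, hδ, fun g' hg' => ⟨t, hto, ?_, hdiam, hsum⟩⟩
  rintro - ⟨x, rfl⟩
  obtain ⟨i, hi⟩ := hball ((x : ℝ), g x) ⟨x, rfl⟩
  refine Set.mem_iUnion.2 ⟨i, hi ?_⟩
  rw [mem_ball]
  calc dist ((x : ℝ), g' x) ((x : ℝ), g x) = dist (g' x) (g x) := by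
        simp [Prod.dist_eq, dist_nonneg]
    _ ≤ dist g' g := ContinuousMap.dist_apply_le_dist x
    _ < δ := hg'



lemma lipschitz_mem_U {K : ℝ≥0} {g : X13} (hg : LipschitzWith K (g : Set.Icc (0:ℝ) 1 → ℝ))
    {s : ℝ} (hs : 1 < s) {c : ℝ≥0∞} (hc : 0 < c) : g ∈ U s c := by
  set k : ℝ := (K : ℝ) with hk
  have hk0 : 0 ≤ k := K.coe_nonneg
  set ε : ℝ := (min c 1).toReal with hε
  have hmin_ne_top : min c 1 ≠ ⊤ := ne_top_of_le_ne_top one_ne_top (min_le_right _ _)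
  have hεpos : 0 < ε := ENNReal.toReal_pos (lt_min hc zero_lt_one).ne' hmin_ne_top
  have hεc : ENNReal.ofReal ε ≤ c := by
    rw [hε, ENNReal.ofReal_toReal hmin_ne_top]; exact min_le_left _ _
  have hs1 : 0 < s - 1 := by linarith
  set B : ℝ := 8 * k + 9 with hB
  have hBpos : (0:ℝ) < B := by positivity
  set δ0 : ℝ := min ε ((ε / B) ^ (1 / (s - 1))) with hδ0
  have hδ0pos : 0 < δ0 := lt_min hεpos (Real.rpow_pos_of_pos (by positivity) _)
  obtain ⟨N, hN⟩ := exists_nat_gt (4 * (k + 1) / δ0)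
  have hN0' : (0:ℝ) < 4 * (k + 1) / δ0 := by positivity
  have hNpos : (0:ℝ) < N := lt_trans hN0' hN
  have hNne : N ≠ 0 := by rintro rfl; simp at hNpos
  have hN1 : 1 ≤ (N:ℝ) := by exact_mod_cast Nat.one_le_iff_ne_zero.2 hNne
  set d : ℝ := 4 * (k + 1) / N with hd
  have hdpos : 0 < d := by positivity
  have hdδ0 : d < δ0 := by
    have h1 := (div_lt_iff₀ hδ0pos).1 hN
    rw [hd, div_lt_iff₀ hNpos]
    nlinarith
  have hdε : d < ε := lt_of_lt_of_le hdδ0 (min_le_left _ _)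
  have hmem : ∀ i : ℕ, i ≤ N → ((i:ℝ)/N) ∈ Set.Icc (0:ℝ) 1 := fun i hi =>
    ⟨by positivity, by rw [div_le_one hNpos]; exact_mod_cast hi⟩
  set t : ℕ → Set (ℝ × ℝ) := fun i =>
    if h : i ≤ N then EMetric.ball (((i:ℝ)/N), g ⟨(i:ℝ)/N, hmem i h⟩) (ENNReal.ofReal (d/2))
    else ∅ with ht
  have hto : ∀ i, IsOpen (t i) := by
    intro i
    rw [ht]; dsimp only
    split
    · exact EMetric.isOpen_ball
    · exact isOpen_empty
  have hdiam : ∀ i, EMetric.diam (t i) ≤ ENNReal.ofReal d := by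
    intro i
    rw [ht]; dsimp only
    split
    · refine le_trans EMetric.diam_ball (le_of_eq ?_)
      rw [← ENNReal.ofReal_ofNat, ← ENNReal.ofReal_mul (by norm_num)]
      congr 1
      ring
    · simp [EMetric.diam]
  have hcov : gr g ⊆ ⋃ i, t i := by
    rintro - ⟨x, rfl⟩
    have hx0 : (0:ℝ) ≤ x := x.2.1
    have hx1 : (x:ℝ) ≤ 1 := x.2.2
    set i : ℕ := ⌊(x:ℝ) * N⌋₊ with hi
    have hiN : i ≤ N := by
      rw [hi]
      calc ⌊(x:ℝ) * N⌋₊ ≤ ⌊(N:ℝ)⌋₊ := Nat.floor_le_floor (by nlinarith)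
        _ = N := Nat.floor_natCast N
    have hle : (i:ℝ)/N ≤ x := by
      rw [div_le_iff₀ hNpos]
      exact Nat.floor_le (by positivity)
    have hlt : (x:ℝ) - (i:ℝ)/N < 1/N := by
      have := Nat.lt_floor_add_one ((x:ℝ) * N)
      rw [sub_lt_iff_lt_add, ← add_div, lt_div_iff₀ hNpos]
      linarith
    refine Set.mem_iUnion.2 ⟨i, ?_⟩
    rw [ht]
    simp only [hiN, dif_pos]
    rw [EMetric.ball, Metric.mem_eball, edist_lt_ofReal]
    have hdx : dist (x:ℝ) ((i:ℝ)/N) ≤ 1/N := by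
      rw [Real.dist_eq, abs_of_nonneg (by linarith)]
      linarith
    have hdy : dist (g x) (g ⟨(i:ℝ)/N, hmem i hiN⟩) ≤ k/N := by
      refine le_trans (hg.dist_le_mul x ⟨(i:ℝ)/N, hmem i hiN⟩) ?_
      have heq : dist x (⟨(i:ℝ)/N, hmem i hiN⟩ : Set.Icc (0:ℝ) 1) = dist (x:ℝ) ((i:ℝ)/N) :=
        rfl
      rw [heq]
      calc k * dist (x:ℝ) ((i:ℝ)/N) ≤ k * (1/N) := by
            apply mul_le_mul_of_nonneg_left hdx hk0
        _ = k/N := by ring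
    rw [Prod.dist_eq]
    have hd2 : d/2 = 2*(k+1)/N := by rw [hd]; ring
    have h1N : 1/(N:ℝ) < d/2 := by
      rw [hd2, div_lt_div_iff₀ hNpos hNpos]
      nlinarith
    have hkN : k/(N:ℝ) < d/2 := by
      rw [hd2, div_lt_div_iff₀ hNpos hNpos]
      nlinarith
    exact max_lt (lt_of_le_of_lt hdx h1N) (lt_of_le_of_lt hdy hkN)
  refine ⟨t, hto, hcov, fun i =>
    le_trans (hdiam i) (le_trans (ENNReal.ofReal_le_ofReal hdε.le) hεc), ?_⟩
  have hzero : ∀ i ∉ Finset.range (N+1), EMetric.diam (t i) ^ s = 0 := by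
    intro i hi
    rw [Finset.mem_range, not_lt] at hi
    have hti : t i = ∅ := by rw [ht]; exact dif_neg (by omega)
    rw [hti]
    simp [EMetric.diam, ENNReal.zero_rpow_of_pos (by linarith : (0:ℝ) < s)]
  rw [tsum_eq_sum hzero]
  have hsum_le : ∑ i ∈ Finset.range (N+1), EMetric.diam (t i) ^ s
      ≤ (N+1 : ℕ) * ENNReal.ofReal d ^ s := by
    calc ∑ i ∈ Finset.range (N+1), EMetric.diam (t i) ^ s
        ≤ ∑ _i ∈ Finset.range (N+1), ENNReal.ofReal d ^ s :=
          Finset.sum_le_sum fun i _ => ENNReal.rpow_le_rpow (hdiam i) (by linarith)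
      _ = (N+1 : ℕ) * ENNReal.ofReal d ^ s := by
          rw [Finset.sum_const, Finset.card_range, nsmul_eq_mul]
  refine lt_of_le_of_lt hsum_le ?_
  have key : ((N:ℝ)+1) * d ^ s < ε := by
    have hds : d ^ s = d * d ^ (s - 1) := by
      nth_rewrite 1 [show s = 1 + (s-1) by ring]
      rw [Real.rpow_add hdpos, Real.rpow_one]
    have hd1 : d ^ (s-1) < ε / B := by
      have h2 : d < (ε / B) ^ (1 / (s - 1)) := lt_of_lt_of_le hdδ0 (min_le_right _ _)
      calc d ^ (s-1) < ((ε / B) ^ (1 / (s - 1))) ^ (s-1) :=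
            Real.rpow_lt_rpow hdpos.le h2 hs1
        _ = ε / B := by
            rw [← Real.rpow_mul (by positivity), one_div_mul_cancel hs1.ne', Real.rpow_one]
    have hNd : ((N:ℝ)+1) * d ≤ 8*(k+1) := by
      rw [hd, mul_div_assoc', div_le_iff₀ hNpos]
      nlinarith
    rw [hds, ← mul_assoc]
    calc ((N:ℝ)+1) * d * d^(s-1) ≤ 8*(k+1) * d^(s-1) :=
          mul_le_mul_of_nonneg_right hNd (Real.rpow_nonneg hdpos.le _)
      _ < 8*(k+1) * (ε/B) := by
          apply mul_lt_mul_of_pos_left hd1 (by positivity)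
      _ < ε := by
          rw [hB, ← mul_div_assoc, div_lt_iff₀ (by positivity : (0:ℝ) < 8*k+9)]
          nlinarith
  calc ((N+1 : ℕ) : ℝ≥0∞) * ENNReal.ofReal d ^ s
      = ENNReal.ofReal (((N:ℝ)+1) * d ^ s) := by
        rw [ENNReal.ofReal_rpow_of_pos hdpos, ENNReal.ofReal_mul (by positivity),
          ← ENNReal.ofReal_natCast (N+1)]
        push_cast
        ring_nf
    _ < ENNReal.ofReal ε := (ENNReal.ofReal_lt_ofReal_iff hεpos).2 key
    _ ≤ c := hεc

lemma dense_U {s : ℝ} (hs : 1 < s) {c : ℝ≥0∞} (hc : 0 < c) : Dense (U s c) := by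
  rw [Metric.dense_iff]
  intro g r hr
  obtain ⟨p, hp⟩ := exists_polynomial_near_continuousMap 0 1 g r hr
  refine ⟨p.toContinuousMapOn _, ?_, ?_⟩
  · rw [mem_ball, dist_eq_norm]
    exact hp
  · -- p.toContinuousMapOn is Lipschitz
    obtain ⟨C, hC⟩ := (isCompact_Icc (a := (0:ℝ)) (b := 1)).exists_bound_of_continuousOn
      (Polynomial.continuous p.derivative).continuousOn
    have hlip : LipschitzOnWith (Real.toNNReal C) (fun x => p.eval x) (Set.Icc (0:ℝ) 1) := by
      apply Convex.lipschitzOnWith_of_nnnorm_deriv_le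
        (fun x _ => p.differentiable.differentiableAt)
        (fun x hx => ?_) (convex_Icc 0 1)
      rw [Polynomial.deriv, ← norm_toNNReal]
      exact Real.toNNReal_mono (hC x hx)
    have hlip' : LipschitzWith (Real.toNNReal C)
        ((p.toContinuousMapOn (Set.Icc (0:ℝ) 1)) : Set.Icc (0:ℝ) 1 → ℝ) :=
      hlip.to_restrict
    exact lipschitz_mem_U hlip' hs hc

def sn (n : ℕ) : ℝ≥0 := 1 + ((n:ℝ≥0)+1)⁻¹

def cm (m : ℕ) : ℝ≥0∞ := ((m:ℝ≥0∞)+1)⁻¹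

lemma one_lt_sn (n : ℕ) : 1 < ((sn n : ℝ≥0) : ℝ) := by
  have : (0:ℝ) < ((n:ℝ)+1)⁻¹ := by positivity
  rw [sn]
  push_cast
  linarith

lemma cm_pos (m : ℕ) : 0 < cm m := by
  rw [cm]
  simp [ENNReal.inv_pos]

lemma hausdorff_zero_of_mem {g : X13} {n : ℕ}
    (h : ∀ m : ℕ, g ∈ U (sn n) (cm m)) : μH[(sn n : ℝ)] (gr g) = 0 := by
  rw [Measure.hausdorffMeasure_apply]
  refine le_antisymm (iSup₂_le fun r hr => ?_) zero_le
  refine ENNReal.le_of_forall_pos_le_add fun ε hε _ => ?_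
  rw [zero_add]
  have hεr : (0:ℝ≥0∞) < min r ε := lt_min hr (by exact_mod_cast hε)
  obtain ⟨m0, hm0⟩ := ENNReal.exists_inv_nat_lt hεr.ne'
  have hcm : cm m0 < min r ε := by
    refine lt_of_le_of_lt ?_ hm0
    rw [cm]
    exact ENNReal.inv_le_inv.2 le_self_add
  obtain ⟨t, hto, hcov, hdiam, hsum⟩ := h m0
  refine le_trans (iInf₂_le t hcov) ?_
  refine le_trans (iInf_le _ fun i => le_trans (hdiam i) (le_trans hcm.le (min_le_left _ _))) ?_
  have h1 : (∑' i, ⨆ _ : (t i).Nonempty, EMetric.diam (t i) ^ (sn n : ℝ))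
      ≤ ∑' i, EMetric.diam (t i) ^ (sn n : ℝ) :=
    ENNReal.tsum_le_tsum fun i => iSup_le fun _ => le_rfl
  exact le_trans h1 (le_trans hsum.le (le_trans hcm.le (min_le_right _ _)))


lemma dimH_le_one {g : X13} (h : ∀ n m : ℕ, g ∈ U (sn n) (cm m)) : dimH (gr g) ≤ 1 := by
  have hn : ∀ n, dimH (gr g) ≤ ((sn n : ℝ≥0) : ℝ≥0∞) := fun n =>
    dimH_le_of_hausdorffMeasure_ne_top
      (by rw [hausdorff_zero_of_mem (h n)]; exact ENNReal.zero_ne_top)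
  refine ENNReal.le_of_forall_pos_le_add fun ε hε _ => ?_
  obtain ⟨n, hn'⟩ := exists_nat_one_div_lt (ε := (ε:ℝ≥0)) hε
  refine le_trans (hn n) ?_
  have hle : (sn n : ℝ≥0) ≤ 1 + ε := by
    rw [sn]
    have h2 : ((n:ℝ≥0)+1)⁻¹ ≤ ε := by
      rw [← one_div]; exact hn'.le
    exact add_le_add_right h2 1
  calc ((sn n : ℝ≥0) : ℝ≥0∞) ≤ ((1 + ε : ℝ≥0) : ℝ≥0∞) := by exact_mod_cast hle
    _ = 1 + (ε : ℝ≥0∞) := by push_cast; rfl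

lemma dimH_eq_one {g : X13} (h : ∀ n m : ℕ, g ∈ U (sn n) (cm m)) : dimH (gr g) = 1 :=
  le_antisymm (dimH_le_one h) (one_le_dimH_gr g)

end Stmt13Aux
end

open Stmt13Aux in
/-- Every continuous function on `[0,1]` is the difference of two continuous functions
whose graphs have Hausdorff dimension `1`. -/
theorem stmt13 (f : C(Set.Icc (0 : ℝ) 1, ℝ)) :
    ∃ f₁ f₂ : C(Set.Icc (0 : ℝ) 1, ℝ), f = f₁ - f₂ ∧
      dimH (Set.range fun x : Set.Icc (0 : ℝ) 1 => ((x : ℝ), f₁ x)) = 1 ∧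
      dimH (Set.range fun x : Set.Icc (0 : ℝ) 1 => ((x : ℝ), f₂ x)) = 1 := by
  classical
  have : Nonempty X13 := ⟨0⟩
  haveI : BaireSpace X13 := BaireSpace.of_completelyPseudoMetrizable
  set W : ℕ × ℕ × Bool → Set X13 := fun p =>
    if p.2.2 then (fun g => f + g) ⁻¹' U (sn p.1) (cm p.2.1) else U (sn p.1) (cm p.2.1)
    with hW
  have hWo : ∀ p, IsOpen (W p) := by
    rintro ⟨n, m, b⟩
    rw [hW]
    cases b
    · simpa using isOpen_U (sn n) (cm m)
    · simpa using (isOpen_U (sn n) (cm m)).preimage (continuous_add_left f)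
  have hWd : ∀ p, Dense (W p) := by
    rintro ⟨n, m, b⟩
    rw [hW]
    cases b
    · simpa using dense_U (one_lt_sn n) (cm_pos m)
    · simp only [if_true]
      exact Dense.preimage (dense_U (one_lt_sn n) (cm_pos m))
        (Homeomorph.addLeft f).isOpenMap
  have hG : Dense (⋂ p, W p) := dense_iInter_of_isOpen hWo hWd
  obtain ⟨g, hg⟩ := hG.nonempty
  simp only [Set.mem_iInter] at hg
  have hg1 : ∀ n m : ℕ, g ∈ U (sn n) (cm m) := fun n m => by
    have := hg (n, m, false); rw [hW] at this; simpa using this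
  have hg2 : ∀ n m : ℕ, f + g ∈ U (sn n) (cm m) := fun n m => by
    have := hg (n, m, true); rw [hW] at this; simpa using this
  exact ⟨f + g, g, (add_sub_cancel_right f g).symm, dimH_eq_one hg2, dimH_eq_one hg1⟩
end
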